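/- arXiv:1605.09749 — 5 statements merged into one kernel-verified Lean document; each statement's English description precedes it below -/
import Mathlib

section
/- For every positive integer k, every matroid M, every collection of bases B₁, …, B_k of M, and every subset A₁ ⊆ B₁, there exist subsets A₂ ⊆ B₂, …, A_k ⊆ B_k such that for every i (indices taken cyclically modulo k, so that the index i−1 for i = 1 means k), the set (B_i \ A_i) ∪ A_{i−1} is a basis of M. That is, all the sets obtained by cyclically shifting the sets A_i by one position are bases. -/
open Set

namespace MCE

variable {α : Type*} {M : Matroid α}

noncomputable def rk (M : Matroid α) (X : Set α) : ℕ :=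
  (M.exists_isBasis' X).choose.ncard

lemma rk_eq_of_basis' {I X : Set α} (hI : M.IsBasis' I X) : rk M X = I.ncard := by
  have hJ := (M.exists_isBasis' X).choose_spec
  rw [rk, Set.ncard_def, Set.ncard_def, hJ.encard_eq_encard hI]

lemma rk_indep {I : Set α} (hI : M.Indep I) : rk M I = I.ncard :=
  rk_eq_of_basis' hI.isBasis_self.isBasis'

lemma ncard_le_rk (hM : M.Finite) {I X : Set α} (hI : M.Indep I) (hIX : I ⊆ X) :
    I.ncard ≤ rk M X := by
  obtain ⟨J, hJ, hIJ⟩ := hI.subset_isBasis'_of_subset hIX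
  rw [rk_eq_of_basis' hJ]
  exact Set.ncard_le_ncard hIJ (M.set_finite J hJ.indep.subset_ground)

lemma rk_mono (hM : M.Finite) {X Y : Set α} (h : X ⊆ Y) : rk M X ≤ rk M Y := by
  obtain ⟨I, hI⟩ := M.exists_isBasis' X
  rw [rk_eq_of_basis' hI]
  exact ncard_le_rk hM hI.indep (hI.subset.trans h)

lemma rk_le_ncard (hM : M.Finite) {X : Set α} (hX : X.Finite) : rk M X ≤ X.ncard := by
  obtain ⟨I, hI⟩ := M.exists_isBasis' X
  rw [rk_eq_of_basis' hI]
  exact Set.ncard_le_ncard hI.subset hX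

lemma rk_insert_le (hM : M.Finite) {X : Set α} (e : α) :
    rk M (insert e X) ≤ rk M X + 1 := by
  obtain ⟨I, hI⟩ := M.exists_isBasis' X
  obtain ⟨J, hJ, hIJ⟩ := hI.indep.subset_isBasis'_of_subset
    (hI.subset.trans (subset_insert e X))
  have hJI : J ⊆ insert e I := by
    intro f hf
    by_contra hfI
    simp only [mem_insert_iff, not_or] at hfI
    have hfX : f ∈ X := by
      rcases hJ.subset hf with h | h
      · exact absurd h hfI.1
      · exact h
    exact hfI.2 (hI.mem_of_insert_indep hfX
      (hJ.indep.subset (insert_subset hf hIJ)))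
  rw [rk_eq_of_basis' hJ, rk_eq_of_basis' hI]
  calc J.ncard ≤ (insert e I).ncard :=
        Set.ncard_le_ncard hJI ((M.set_finite I hI.indep.subset_ground).insert e)
    _ ≤ I.ncard + 1 := Set.ncard_insert_le e I

lemma rk_submod (hM : M.Finite) (X Y : Set α) :
    rk M (X ∪ Y) + rk M (X ∩ Y) ≤ rk M X + rk M Y := by
  obtain ⟨I, hI⟩ := M.exists_isBasis' (X ∩ Y)
  obtain ⟨J₁, hJ₁, hIJ₁⟩ := hI.indep.subset_isBasis'_of_subset
    (hI.subset.trans inter_subset_left)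
  obtain ⟨J, hJ, hJ₁J⟩ := hJ₁.indep.subset_isBasis'_of_subset
    (hJ₁.subset.trans subset_union_left)
  have hfinJ : J.Finite := M.set_finite J hJ.indep.subset_ground
  have hdiffY : J \ J₁ ⊆ Y := by
    intro f hf
    rcases hJ.subset hf.1 with hfX | hfY
    · exact absurd (hJ₁.mem_of_insert_indep hfX
        (hJ.indep.subset (insert_subset hf.1 hJ₁J))) hf.2
    · exact hfY
  have hK : M.Indep ((J \ J₁) ∪ I) :=
    hJ.indep.subset (union_subset diff_subset (hIJ₁.trans hJ₁J))
  have hKY : (J \ J₁) ∪ I ⊆ Y := union_subset hdiffY (hI.subset.trans inter_subset_right)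
  have hcard : ((J \ J₁) ∪ I).ncard = J.ncard - J₁.ncard + I.ncard := by
    rw [Set.ncard_union_eq (disjoint_left.mpr fun a ha hai => ha.2 (hIJ₁ hai))
      (hfinJ.diff (t := _)) (M.set_finite I hI.indep.subset_ground),
      Set.ncard_diff hJ₁J (hfinJ.subset hJ₁J)]
  have h1 : ((J \ J₁) ∪ I).ncard ≤ rk M Y := ncard_le_rk hM hK hKY
  have h2 : J₁.ncard ≤ J.ncard := Set.ncard_le_ncard hJ₁J hfinJ
  rw [rk_eq_of_basis' hJ, rk_eq_of_basis' hI, rk_eq_of_basis' hJ₁]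
  omega

lemma rk_spans_mono (hM : M.Finite) {S T : Set α} (e : α) (hST : S ⊆ T)
    (h : rk M (insert e S) = rk M S) : rk M (insert e T) = rk M T := by
  have hsub := rk_submod hM (insert e S) T
  have h1 : insert e S ∪ T = insert e T := by
    rw [insert_union, union_eq_self_of_subset_left hST]
  have h2 : S ⊆ insert e S ∩ T := subset_inter (subset_insert e S) hST
  have h3 : rk M S ≤ rk M (insert e S ∩ T) := rk_mono hM h2
  have h4 : rk M T ≤ rk M (insert e T) := rk_mono hM (subset_insert e T)
  rw [h1, h] at hsub
  omega

lemma indep_of_rk_eq_ncard (hM : M.Finite) {X : Set α} (hfin : X.Finite)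
    (h : rk M X = X.ncard) : M.Indep X := by
  obtain ⟨I, hI⟩ := M.exists_isBasis' X
  rw [rk_eq_of_basis' hI] at h
  have : I = X := Set.eq_of_subset_of_ncard_le hI.subset (le_of_eq h.symm) hfin
  exact this ▸ hI.indep

lemma base_of_indep_ncard (hM : M.Finite) {I B : Set α} (hI : M.Indep I) (hB : M.IsBase B)
    (h : I.ncard = B.ncard) : M.IsBase I := by
  obtain ⟨B', hB', hIB'⟩ := hI.exists_isBase_superset
  have : I = B' := Set.eq_of_subset_of_ncard_le hIB'
    (by rw [hB'.ncard_eq_ncard_of_isBase hB, ← h]) (M.set_finite B' hB'.subset_ground)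
  exact this ▸ hB'

lemma ncard_le_of_indep (hM : M.Finite) {I B : Set α} (hI : M.Indep I) (hB : M.IsBase B) :
    I.ncard ≤ B.ncard := by
  obtain ⟨B', hB', hIB'⟩ := hI.exists_isBase_superset
  rw [← hB'.ncard_eq_ncard_of_isBase hB]
  exact Set.ncard_le_ncard hIB' (M.set_finite B' hB'.subset_ground)

lemma PL (hM : M.Finite) :
    ∀ (n : ℕ) (W Y X : Set α), W.ncard = n → W ⊆ M.E → M.Indep Y → M.Indep X →
      Disjoint W Y → Disjoint W X →
      (∀ Z ⊆ W, Z.ncard + Y.ncard + X.ncard ≤ rk M (Y ∪ Z) + rk M (X ∪ Z)) →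
      ∃ P ⊆ W, M.Indep (Y ∪ P) ∧ M.Indep (X ∪ (W \ P)) := by
  intro n
  induction n with
  | zero =>
    intro W Y X hcard hWE hY hX _ _ _
    have hWfin : W.Finite := M.set_finite W hWE
    have hW : W = ∅ := (Set.ncard_eq_zero hWfin).mp hcard
    exact ⟨∅, empty_subset _, by simpa [hW] using hY, by simpa [hW] using hX⟩
  | succ n ih =>
    intro W Y X hcard hWE hY hX hdY hdX H
    have hWfin : W.Finite := M.set_finite W hWE
    obtain ⟨e, he⟩ := Set.nonempty_of_ncard_ne_zero (s := W) (by omega)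
    have hW'card : (W \ {e}).ncard = n := by
      have := Set.ncard_diff_singleton_of_mem he
      omega
    have hW'sub : W \ {e} ⊆ W := diff_subset
    have heE : e ∈ M.E := hWE he
    have heX : e ∉ X := disjoint_left.mp hdX he
    have heY : e ∉ Y := disjoint_left.mp hdY he
    have hfinX : X.Finite := M.set_finite X hX.subset_ground
    have hfinY : Y.Finite := M.set_finite Y hY.subset_ground
    have heW' : e ∉ W \ {e} := fun h => h.2 rfl
    by_cases hx : M.Indep (insert e X) ∧ ∀ Z ⊆ W \ {e},
        Z.ncard + Y.ncard + (insert e X).ncard ≤ rk M (Y ∪ Z) + rk M (insert e X ∪ Z)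
    · obtain ⟨P, hPW', h1, h2⟩ := ih (W \ {e}) Y (insert e X) hW'card
        (hW'sub.trans hWE) hY hx.1 (hdY.mono_left hW'sub)
        (disjoint_left.mpr fun f hf => by
          simp only [mem_insert_iff, not_or]
          exact ⟨fun h => hf.2 (by simp [h]), disjoint_left.mp hdX (hW'sub hf)⟩) hx.2
      refine ⟨P, hPW'.trans hW'sub, h1, ?_⟩
      have heP : e ∉ P := fun h => heW' (hPW' h)
      have hWP : W \ P = insert e ((W \ {e}) \ P) := by
        ext f
        simp only [mem_insert_iff, mem_diff, mem_singleton_iff]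
        constructor
        · rintro ⟨hfW, hfP⟩
          by_cases hfe : f = e
          · exact Or.inl hfe
          · exact Or.inr ⟨⟨hfW, hfe⟩, hfP⟩
        · rintro (rfl | ⟨⟨hfW, _⟩, hfP⟩)
          · exact ⟨he, heP⟩
          · exact ⟨hfW, hfP⟩
      rw [hWP, union_insert, ← insert_union]
      exact h2
    · by_cases hy : M.Indep (insert e Y) ∧ ∀ Z ⊆ W \ {e},
          Z.ncard + (insert e Y).ncard + X.ncard ≤ rk M (insert e Y ∪ Z) + rk M (X ∪ Z)
      · obtain ⟨P, hPW', h1, h2⟩ := ih (W \ {e}) (insert e Y) X hW'card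
          (hW'sub.trans hWE) hy.1 hX
          (disjoint_left.mpr fun f hf => by
            simp only [mem_insert_iff, not_or]
            exact ⟨fun h => hf.2 (by simp [h]), disjoint_left.mp hdY (hW'sub hf)⟩)
          (hdX.mono_left hW'sub) hy.2
        refine ⟨insert e P, insert_subset he (hPW'.trans hW'sub), ?_, ?_⟩
        · rw [union_insert, ← insert_union]
          exact h1
        · have hid : W \ insert e P = (W \ {e}) \ P := by
            rw [diff_diff, singleton_union]
          rw [hid]
          exact h2
      · exfalso
        push_neg at hx hy
        have hrkX : rk M X = X.ncard := rk_indep hX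
        have hrkY : rk M Y = Y.ncard := rk_indep hY
        have hXe_le : rk M (insert e X) ≤ X.ncard + 1 := by
          have := rk_insert_le hM (X := X) e; omega
        have hXe_ge : X.ncard ≤ rk M (insert e X) := by
          have := rk_mono hM (subset_insert e X); omega
        have hYe_le : rk M (insert e Y) ≤ Y.ncard + 1 := by
          have := rk_insert_le hM (X := Y) e; omega
        have hYe_ge : Y.ncard ≤ rk M (insert e Y) := by
          have := rk_mono hM (subset_insert e Y); omega
        have hHe := H {e} (singleton_subset_iff.mpr he)
        rw [ncard_singleton, union_singleton, union_singleton] at hHe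
        by_cases hXe : rk M (insert e X) = X.ncard + 1
        · by_cases hYe : rk M (insert e Y) = Y.ncard + 1
          · -- main case: both insertions independent, both contraction hypotheses fail
            have hiX : M.Indep (insert e X) := indep_of_rk_eq_ncard hM (hfinX.insert e)
              (by rw [hXe, Set.ncard_insert_of_notMem heX hfinX])
            have hiY : M.Indep (insert e Y) := indep_of_rk_eq_ncard hM (hfinY.insert e)
              (by rw [hYe, Set.ncard_insert_of_notMem heY hfinY])
            obtain ⟨Z₁, hZ₁sub, hZ₁lt⟩ := hx hiX
            obtain ⟨Z₂, hZ₂sub, hZ₂lt⟩ := hy hiY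
            have hfinZ₁ : Z₁.Finite := hWfin.subset (hZ₁sub.trans hW'sub)
            have hfinZ₂ : Z₂.Finite := hWfin.subset (hZ₂sub.trans hW'sub)
            have heZ₁ : e ∉ Z₁ := fun h => (hZ₁sub h).2 rfl
            have heZ₂ : e ∉ Z₂ := fun h => (hZ₂sub h).2 rfl
            rw [insert_union, Set.ncard_insert_of_notMem heX hfinX] at hZ₁lt
            rw [insert_union, Set.ncard_insert_of_notMem heY hfinY] at hZ₂lt
            -- tightness and spanning for Z₁
            have hHZ₁ := H Z₁ (hZ₁sub.trans hW'sub)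
            have hHeZ₁ := H (insert e Z₁) (insert_subset he (hZ₁sub.trans hW'sub))
            rw [Set.ncard_insert_of_notMem heZ₁ hfinZ₁, union_insert, union_insert] at hHeZ₁
            have i1 : rk M (insert e (Y ∪ Z₁)) ≤ rk M (Y ∪ Z₁) + 1 := rk_insert_le hM e
            have i2 : rk M (X ∪ Z₁) ≤ rk M (insert e (X ∪ Z₁)) := rk_mono hM (subset_insert _ _)
            have spans₁ : rk M (insert e (X ∪ Z₁)) = rk M (X ∪ Z₁) := by omega
            have tight₁ : rk M (Y ∪ Z₁) + rk M (X ∪ Z₁) = Z₁.ncard + Y.ncard + X.ncard := by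
              omega
            -- tightness and spanning for Z₂
            have hHZ₂ := H Z₂ (hZ₂sub.trans hW'sub)
            have hHeZ₂ := H (insert e Z₂) (insert_subset he (hZ₂sub.trans hW'sub))
            rw [Set.ncard_insert_of_notMem heZ₂ hfinZ₂, union_insert, union_insert] at hHeZ₂
            have i3 : rk M (insert e (X ∪ Z₂)) ≤ rk M (X ∪ Z₂) + 1 := rk_insert_le hM e
            have i4 : rk M (Y ∪ Z₂) ≤ rk M (insert e (Y ∪ Z₂)) := rk_mono hM (subset_insert _ _)
            have spans₂ : rk M (insert e (Y ∪ Z₂)) = rk M (Y ∪ Z₂) := by omega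
            have tight₂ : rk M (Y ∪ Z₂) + rk M (X ∪ Z₂) = Z₂.ncard + Y.ncard + X.ncard := by
              omega
            -- uncrossing
            have submodY := rk_submod hM (Y ∪ Z₁) (Y ∪ Z₂)
            have submodX := rk_submod hM (X ∪ Z₁) (X ∪ Z₂)
            rw [← union_union_distrib_left, ← union_inter_distrib_left] at submodY submodX
            have hHU := H (Z₁ ∪ Z₂) (union_subset (hZ₁sub.trans hW'sub) (hZ₂sub.trans hW'sub))
            have hHI := H (Z₁ ∩ Z₂)
              ((inter_subset_left.trans hZ₁sub).trans hW'sub)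
            have cardsum : (Z₁ ∪ Z₂).ncard + (Z₁ ∩ Z₂).ncard = Z₁.ncard + Z₂.ncard :=
              Set.ncard_union_add_ncard_inter Z₁ Z₂ hfinZ₁ hfinZ₂
            have tightU : rk M (Y ∪ (Z₁ ∪ Z₂)) + rk M (X ∪ (Z₁ ∪ Z₂))
                = (Z₁ ∪ Z₂).ncard + Y.ncard + X.ncard := by omega
            have spansXU : rk M (insert e (X ∪ (Z₁ ∪ Z₂))) = rk M (X ∪ (Z₁ ∪ Z₂)) :=
              rk_spans_mono hM e (union_subset_union_right X subset_union_left) spans₁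
            have spansYU : rk M (insert e (Y ∪ (Z₁ ∪ Z₂))) = rk M (Y ∪ (Z₁ ∪ Z₂)) :=
              rk_spans_mono hM e (union_subset_union_right Y subset_union_right) spans₂
            have heZU : e ∉ Z₁ ∪ Z₂ := fun h => h.elim heZ₁ heZ₂
            have hfinal := H (insert e (Z₁ ∪ Z₂))
              (insert_subset he (union_subset (hZ₁sub.trans hW'sub) (hZ₂sub.trans hW'sub)))
            rw [Set.ncard_insert_of_notMem heZU (hfinZ₁.union hfinZ₂),
              union_insert, union_insert] at hfinal
            omega
          · -- e spans Y; the Y-side contraction hypothesis must fail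
            have hYe' : rk M (insert e Y) = Y.ncard := by omega
            have hXe'' : rk M (insert e X) = X.ncard + 1 := hXe
            have hiX : M.Indep (insert e X) := indep_of_rk_eq_ncard hM (hfinX.insert e)
              (by rw [hXe, Set.ncard_insert_of_notMem heX hfinX])
            obtain ⟨Z₁, hZ₁sub, hZ₁lt⟩ := hx hiX
            have hfinZ₁ : Z₁.Finite := hWfin.subset (hZ₁sub.trans hW'sub)
            have heZ₁ : e ∉ Z₁ := fun h => (hZ₁sub h).2 rfl
            rw [insert_union, Set.ncard_insert_of_notMem heX hfinX] at hZ₁lt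
            have spansY : rk M (insert e (Y ∪ Z₁)) = rk M (Y ∪ Z₁) :=
              rk_spans_mono hM e subset_union_left (by rw [hYe', hrkY])
            have hHeZ₁ := H (insert e Z₁) (insert_subset he (hZ₁sub.trans hW'sub))
            rw [Set.ncard_insert_of_notMem heZ₁ hfinZ₁, union_insert, union_insert] at hHeZ₁
            omega
        · -- e spans X
          have hXe' : rk M (insert e X) = X.ncard := by omega
          have hYe : rk M (insert e Y) = Y.ncard + 1 := by omega
          have hiY : M.Indep (insert e Y) := indep_of_rk_eq_ncard hM (hfinY.insert e)
            (by rw [hYe, Set.ncard_insert_of_notMem heY hfinY])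
          obtain ⟨Z₂, hZ₂sub, hZ₂lt⟩ := hy hiY
          have hfinZ₂ : Z₂.Finite := hWfin.subset (hZ₂sub.trans hW'sub)
          have heZ₂ : e ∉ Z₂ := fun h => (hZ₂sub h).2 rfl
          rw [insert_union, Set.ncard_insert_of_notMem heY hfinY] at hZ₂lt
          have spansX : rk M (insert e (X ∪ Z₂)) = rk M (X ∪ Z₂) :=
            rk_spans_mono hM e subset_union_left (by rw [hXe', hrkX])
          have hHeZ₂ := H (insert e Z₂) (insert_subset he (hZ₂sub.trans hW'sub))
          rw [Set.ncard_insert_of_notMem heZ₂ hfinZ₂, union_insert, union_insert] at hHeZ₂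
          omega

lemma GREL (hM : M.Finite) :
    ∀ (n : ℕ) (S B₁ B₂ A₁ : Set α), M.IsBase B₁ → M.IsBase B₂ → S ⊆ B₁ → S ⊆ B₂ →
      A₁ ⊆ B₁ → Disjoint A₁ S → ((B₁ ∩ B₂) \ S).ncard = n →
      ∃ A₂ ⊆ B₂ \ S, A₁ ∩ B₂ ⊆ A₂ ∧ M.IsBase ((B₁ \ A₁) ∪ A₂) ∧ M.IsBase ((B₂ \ A₂) ∪ A₁) := by
  intro n
  induction n with
  | zero =>
    intro S B₁ B₂ A₁ hB₁ hB₂ hSB₁ hSB₂ hA₁ hdis hn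
    have hfinB₁ : B₁.Finite := M.set_finite B₁ hB₁.subset_ground
    have hfinB₂ : B₂.Finite := M.set_finite B₂ hB₂.subset_ground
    have hBB : B₁ ∩ B₂ ⊆ S := by
      rw [← Set.diff_eq_empty]
      exact (Set.ncard_eq_zero ((hfinB₁.inter_of_left B₂).diff (t := S))).mp hn
    have hYind : M.Indep (B₁ \ A₁) := hB₁.indep.subset diff_subset
    have hXind : M.Indep (A₁ ∪ S) := hB₁.indep.subset (union_subset hA₁ hSB₁)
    have hWE : B₂ \ S ⊆ M.E := diff_subset.trans hB₂.subset_ground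
    have hdWY : Disjoint (B₂ \ S) (B₁ \ A₁) :=
      disjoint_left.mpr fun f hf hfY => hf.2 (hBB ⟨hfY.1, hf.1⟩)
    have hdWX : Disjoint (B₂ \ S) (A₁ ∪ S) := disjoint_left.mpr fun f hf hfX => by
      rcases hfX with hfA | hfS
      · exact hf.2 (hBB ⟨hA₁ hfA, hf.1⟩)
      · exact hf.2 hfS
    have hYX : (B₁ \ A₁) ∩ (A₁ ∪ S) = S := by
      ext f
      constructor
      · rintro ⟨⟨hfB, hfA⟩, hfA' | hfS⟩
        · exact absurd hfA' hfA
        · exact hfS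
      · intro hfS
        exact ⟨⟨hSB₁ hfS, fun hfA => disjoint_left.mp hdis hfA hfS⟩, Or.inr hfS⟩
    have hcardY : (B₁ \ A₁).ncard + A₁.ncard = B₁.ncard :=
      Set.ncard_diff_add_ncard_of_subset hA₁ hfinB₁
    have hcardX : (A₁ ∪ S).ncard = A₁.ncard + S.ncard :=
      Set.ncard_union_eq hdis (hfinB₁.subset hA₁) (hfinB₁.subset hSB₁)
    have hcardW : (B₂ \ S).ncard + S.ncard = B₂.ncard :=
      Set.ncard_diff_add_ncard_of_subset hSB₂ hfinB₂
    have hB₁B₂ : B₁.ncard = B₂.ncard := hB₁.ncard_eq_ncard_of_isBase hB₂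
    have hrkB₁ : rk M B₁ = B₁.ncard := rk_indep hB₁.indep
    have H : ∀ Z ⊆ B₂ \ S, Z.ncard + (B₁ \ A₁).ncard + (A₁ ∪ S).ncard ≤
        rk M ((B₁ \ A₁) ∪ Z) + rk M ((A₁ ∪ S) ∪ Z) := by
      intro Z hZ
      have hsub := rk_submod hM ((B₁ \ A₁) ∪ Z) ((A₁ ∪ S) ∪ Z)
      have hU : ((B₁ \ A₁) ∪ Z) ∪ ((A₁ ∪ S) ∪ Z) = B₁ ∪ Z := by
        rw [Set.union_union_union_comm, union_self, ← union_assoc,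
          diff_union_of_subset hA₁, union_eq_self_of_subset_right hSB₁]
      have hI : ((B₁ \ A₁) ∪ Z) ∩ ((A₁ ∪ S) ∪ Z) = S ∪ Z := by
        rw [← Set.inter_union_distrib_right, hYX]
      rw [hU, hI] at hsub
      have h1 : B₁.ncard ≤ rk M (B₁ ∪ Z) := by
        have := rk_mono hM (subset_union_left (s := B₁) (t := Z)); omega
      have hSZdisj : Disjoint S Z := disjoint_left.mpr fun f hfS hfZ => (hZ hfZ).2 hfS
      have hSZind : M.Indep (S ∪ Z) :=
        hB₂.indep.subset (union_subset hSB₂ (hZ.trans diff_subset))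
      have h2 : rk M (S ∪ Z) = S.ncard + Z.ncard := by
        rw [rk_indep hSZind, Set.ncard_union_eq hSZdisj (hfinB₁.subset hSB₁)
          (hfinB₂.subset (hZ.trans diff_subset))]
      omega
    obtain ⟨P, hPW, h1, h2⟩ := PL hM (B₂ \ S).ncard (B₂ \ S) (B₁ \ A₁) (A₁ ∪ S)
      rfl hWE hYind hXind hdWY hdWX H
    have hfinW : (B₂ \ S).Finite := hfinB₂.diff (t := S)
    have hcard1 : ((B₁ \ A₁) ∪ P).ncard = (B₁ \ A₁).ncard + P.ncard :=
      Set.ncard_union_eq (hdWY.mono_left hPW).symm (hfinB₁.diff (t := A₁)) (hfinW.subset hPW)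
    have hcard2 : ((A₁ ∪ S) ∪ ((B₂ \ S) \ P)).ncard
        = (A₁ ∪ S).ncard + ((B₂ \ S) \ P).ncard :=
      Set.ncard_union_eq ((hdWX.mono_left diff_subset).symm)
        (hfinB₁.subset (union_subset hA₁ hSB₁)) (hfinW.diff (t := P))
    have hcard3 : ((B₂ \ S) \ P).ncard + P.ncard = (B₂ \ S).ncard :=
      Set.ncard_diff_add_ncard_of_subset hPW hfinW
    have hle1 : ((B₁ \ A₁) ∪ P).ncard ≤ B₁.ncard := ncard_le_of_indep hM h1 hB₁
    have hle2 : ((A₁ ∪ S) ∪ ((B₂ \ S) \ P)).ncard ≤ B₁.ncard := ncard_le_of_indep hM h2 hB₁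
    have heq1 : ((B₁ \ A₁) ∪ P).ncard = B₁.ncard := by omega
    have heq2 : ((A₁ ∪ S) ∪ ((B₂ \ S) \ P)).ncard = B₁.ncard := by omega
    have hbase1 : M.IsBase ((B₁ \ A₁) ∪ P) := base_of_indep_ncard hM h1 hB₁ heq1
    have hbase2 : M.IsBase ((A₁ ∪ S) ∪ ((B₂ \ S) \ P)) := base_of_indep_ncard hM h2 hB₁ heq2
    refine ⟨P, hPW, ?_, hbase1, ?_⟩
    · intro f hf
      exact absurd (hBB ⟨hA₁ hf.1, hf.2⟩) (disjoint_left.mp hdis hf.1)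
    · have hid : (B₂ \ P) ∪ A₁ = (A₁ ∪ S) ∪ ((B₂ \ S) \ P) := by
        ext f
        simp only [mem_union, mem_diff]
        constructor
        · rintro (⟨hfB, hfP⟩ | hfA)
          · by_cases hfS : f ∈ S
            · exact Or.inl (Or.inr hfS)
            · exact Or.inr ⟨⟨hfB, hfS⟩, hfP⟩
          · exact Or.inl (Or.inl hfA)
        · rintro ((hfA | hfS) | ⟨⟨hfB, _⟩, hfP⟩)
          · exact Or.inr hfA
          · exact Or.inl ⟨hSB₂ hfS, fun hfP => (hPW hfP).2 hfS⟩
          · exact Or.inl ⟨hfB, hfP⟩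
      rw [hid]
      exact hbase2
  | succ n ih =>
    intro S B₁ B₂ A₁ hB₁ hB₂ hSB₁ hSB₂ hA₁ hdis hn
    have hfinB₁ : B₁.Finite := M.set_finite B₁ hB₁.subset_ground
    obtain ⟨e, he⟩ := Set.nonempty_of_ncard_ne_zero (s := (B₁ ∩ B₂) \ S) (by omega)
    have heB₁ : e ∈ B₁ := he.1.1
    have heB₂ : e ∈ B₂ := he.1.2
    have heS : e ∉ S := he.2
    have hcard' : ((B₁ ∩ B₂) \ insert e S).ncard = n := by
      have hid : (B₁ ∩ B₂) \ insert e S = ((B₁ ∩ B₂) \ S) \ {e} := by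
        rw [diff_diff, union_singleton]
      rw [hid]
      have := Set.ncard_diff_singleton_of_mem he
      omega
    have hSB₁' : insert e S ⊆ B₁ := insert_subset heB₁ hSB₁
    have hSB₂' : insert e S ⊆ B₂ := insert_subset heB₂ hSB₂
    by_cases heA : e ∈ A₁
    · -- e is a common element lying in A₁ : it must go into A₂
      obtain ⟨A₂', hA₂'sub, hcap', hb1', hb2'⟩ := ih (insert e S) B₁ B₂ (A₁ \ {e})
        hB₁ hB₂ hSB₁' hSB₂' (diff_subset.trans hA₁)
        (disjoint_left.mpr fun f hf hfS => by
          rcases hfS with rfl | hfS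
          · exact hf.2 rfl
          · exact disjoint_left.mp hdis hf.1 hfS)
        hcard'
      have heA₂' : e ∉ A₂' := fun h => (hA₂'sub h).2 (mem_insert e S)
      refine ⟨insert e A₂', insert_subset ⟨heB₂, heS⟩
        (hA₂'sub.trans (diff_subset_diff_right (subset_insert e S))), ?_, ?_, ?_⟩
      · intro f hf
        by_cases hfe : f = e
        · exact hfe ▸ mem_insert e A₂'
        · exact mem_insert_of_mem e (hcap' ⟨⟨hf.1, hfe⟩, hf.2⟩)
      · have hid1 : (B₁ \ A₁) ∪ insert e A₂' = (B₁ \ (A₁ \ {e})) ∪ A₂' := by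
          ext f
          simp only [mem_union, mem_diff, mem_insert_iff, mem_singleton_iff]
          constructor
          · rintro (⟨hfB, hfA⟩ | rfl | hfA₂)
            · exact Or.inl ⟨hfB, fun h => hfA h.1⟩
            · exact Or.inl ⟨heB₁, fun h => h.2 rfl⟩
            · exact Or.inr hfA₂
          · rintro (⟨hfB, hfA⟩ | hfA₂)
            · by_cases hfe : f = e
              · exact Or.inr (Or.inl hfe)
              · exact Or.inl ⟨hfB, fun h => hfA ⟨h, hfe⟩⟩
            · exact Or.inr (Or.inr hfA₂)
        rw [hid1]
        exact hb1'
      · have hid2 : (B₂ \ insert e A₂') ∪ A₁ = (B₂ \ A₂') ∪ (A₁ \ {e}) := by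
          ext f
          simp only [mem_union, mem_diff, mem_insert_iff, mem_singleton_iff, not_or]
          constructor
          · rintro (⟨hfB, hfe, hfA₂⟩ | hfA)
            · exact Or.inl ⟨hfB, hfA₂⟩
            · by_cases hfe : f = e
              · exact Or.inl ⟨hfe ▸ heB₂, hfe ▸ heA₂'⟩
              · exact Or.inr ⟨hfA, hfe⟩
          · rintro (⟨hfB, hfA₂⟩ | ⟨hfA, hfe⟩)
            · by_cases hfe : f = e
              · exact Or.inr (hfe ▸ heA)
              · exact Or.inl ⟨hfB, hfe, hfA₂⟩
            · exact Or.inr hfA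
        rw [hid2]
        exact hb2'
    · -- e is a common element not in A₁
      obtain ⟨A₂', hA₂'sub, hcap', hb1', hb2'⟩ := ih (insert e S) B₁ B₂ A₁
        hB₁ hB₂ hSB₁' hSB₂' hA₁
        (disjoint_left.mpr fun f hf hfS => by
          rcases hfS with rfl | hfS
          · exact heA hf
          · exact disjoint_left.mp hdis hf hfS)
        hcard'
      exact ⟨A₂', hA₂'sub.trans (diff_subset_diff_right (subset_insert e S)),
        hcap', hb1', hb2'⟩

lemma greene (hM : M.Finite) {B₁ B₂ A₁ : Set α} (hB₁ : M.IsBase B₁) (hB₂ : M.IsBase B₂)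
    (hA₁ : A₁ ⊆ B₁) :
    ∃ A₂ ⊆ B₂, A₁ ∩ B₂ ⊆ A₂ ∧ M.IsBase ((B₁ \ A₁) ∪ A₂) ∧ M.IsBase ((B₂ \ A₂) ∪ A₁) := by
  obtain ⟨A₂, hsub, h1, h2, h3⟩ := GREL hM ((B₁ ∩ B₂) \ ∅).ncard ∅ B₁ B₂ A₁ hB₁ hB₂
    (empty_subset _) (empty_subset _) hA₁ (disjoint_empty A₁) rfl
  exact ⟨A₂, by simpa using hsub, h1, h2, h3⟩

lemma AUX (hM : M.Finite) :
    ∀ (n : ℕ) (C : ℕ → Set α), (∀ i ≤ n, M.IsBase (C i)) → ∀ A₁ ⊆ C 0,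
      ∃ A : ℕ → Set α, A 0 = A₁ ∧ (∀ i ≤ n, A i ⊆ C i) ∧
        (∀ i, 1 ≤ i → i ≤ n → M.IsBase ((C i \ A i) ∪ A (i - 1))) ∧
        M.IsBase ((C 0 \ A₁) ∪ A n) := by
  intro n
  induction n with
  | zero =>
    intro C hC A₁ hA₁
    refine ⟨fun _ => A₁, rfl, fun i hi => by
        have : i = 0 := by omega
        exact this ▸ hA₁, fun i h1 h2 => by omega, ?_⟩
    rw [diff_union_of_subset hA₁]
    exact hC 0 le_rfl
  | succ n ih =>
    intro C hC A₁ hA₁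
    obtain ⟨L, hLsub, hLcap, hb1, hb2⟩ := greene hM (hC 0 (by omega)) (hC (n+1) le_rfl) hA₁
    have hDdiff : ((C (n+1) \ L) ∪ A₁) \ A₁ = C (n+1) \ L := by
      ext f
      simp only [mem_union, mem_diff]
      constructor
      · rintro ⟨hf | hf, hfA⟩
        · exact hf
        · exact absurd hf hfA
      · intro hf
        exact ⟨Or.inl hf, fun hfA => hf.2 (hLcap ⟨hfA, hf.1⟩)⟩
    obtain ⟨A', hA'0, hA'sub, hmid, hwrap⟩ := ih
      (Function.update C 0 ((C (n+1) \ L) ∪ A₁))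
      (fun i hi => by
        by_cases h : i = 0
        · rw [h, Function.update_self]
          exact hb2
        · rw [Function.update_of_ne h]
          exact hC i (by omega))
      A₁ (by rw [Function.update_self]; exact subset_union_right)
    refine ⟨Function.update A' (n+1) L, ?_, ?_, ?_, ?_⟩
    · rw [Function.update_of_ne (by omega)]
      exact hA'0
    · intro i hi
      by_cases hi' : i = n+1
      · rw [hi', Function.update_self]
        exact hLsub
      · rw [Function.update_of_ne hi']
        by_cases h0 : i = 0
        · rw [h0, hA'0]
          exact h0 ▸ hA₁
        · have h := hA'sub i (by omega)
          rwa [Function.update_of_ne h0] at h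
    · intro i h1 h2
      by_cases hi' : i = n+1
      · subst hi'
        rw [Function.update_self, Nat.add_sub_cancel,
          Function.update_of_ne (by omega : n ≠ n + 1)]
        have h := hwrap
        rw [Function.update_self] at h
        rwa [hDdiff] at h
      · rw [Function.update_of_ne hi', Function.update_of_ne (by omega : i - 1 ≠ n + 1)]
        have h := hmid i h1 (by omega)
        rwa [Function.update_of_ne (by omega : i ≠ 0)] at h
    · rw [Function.update_self]
      exact hb1

end MCE

/-- **Multiple cyclic exchange property.**
For every positive integer `k`, every (finite) matroid `M`, every collection of bases
`B 0, …, B (k-1)` of `M`, and every subset `A₁ ⊆ B 0`, there exist subsets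
`A i ⊆ B i` with `A 0 = A₁` such that for every `i` (indices cyclic mod `k`),
the set `(B i \ A i) ∪ A (i-1)` is a basis of `M`. -/
theorem multiple_cyclic_exchange {α : Type*} {k : ℕ} [NeZero k]
    (M : Matroid α) (hM : M.Finite)
    (B : Fin k → Set α) (hB : ∀ i, M.IsBase (B i))
    (A₁ : Set α) (hA₁ : A₁ ⊆ B 0) :
    ∃ A : Fin k → Set α, A 0 = A₁ ∧ (∀ i, A i ⊆ B i) ∧
      ∀ i : Fin k, M.IsBase ((B i \ A i) ∪ A (i - 1)) := by
  have hkpos : 0 < k := NeZero.pos k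
  obtain ⟨n, hk⟩ : ∃ n, k = n + 1 := ⟨k - 1, by omega⟩
  set C : ℕ → Set α := fun i => B ⟨i % k, Nat.mod_lt i hkpos⟩ with hCdef
  have hC : ∀ (i : Fin k), C i.val = B i := fun i => by
    have hmk : (⟨i.val % k, Nat.mod_lt _ hkpos⟩ : Fin k) = i := Fin.ext (Nat.mod_eq_of_lt i.isLt)
    simp only [hCdef]
    rw [hmk]
  have hC0 : C 0 = B 0 := hC 0
  obtain ⟨A', hA'0, hA'sub, hmid, hwrap⟩ := MCE.AUX hM n C
    (fun i _ => hB _) A₁ (hC0 ▸ hA₁)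
  refine ⟨fun i => A' i.val, hA'0, ?_, ?_⟩
  · intro i
    have h := hA'sub i.val (by have := i.isLt; omega)
    rwa [hC i] at h
  · intro i
    by_cases hi : i = 0
    · subst hi
      have hval : ((0 - 1 : Fin k)).val = n := by
        subst hk
        rw [Fin.sub_def]
        simp only [Fin.val_one', Fin.val_zero]
        rcases Nat.lt_or_ge 1 (n+1) with h | h
        · rw [Nat.mod_eq_of_lt h, Nat.add_zero, Nat.mod_eq_of_lt] <;> omega
        · have hn0 : n = 0 := by omega
          subst hn0
          decide
      show M.IsBase ((B 0 \ A' (0 : Fin k).val) ∪ A' ((0 - 1 : Fin k)).val)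
      rw [hval]
      show M.IsBase ((B 0 \ A' 0) ∪ A' n)
      rw [hA'0, ← hC0]
      exact hwrap
    · have h1 : 1 ≤ i.val := by
        rcases Nat.eq_zero_or_pos i.val with h | h
        · exact absurd (Fin.ext h) hi
        · exact h
      have hval : (i - 1).val = i.val - 1 := by
        subst hk
        rw [Fin.sub_def]
        simp only [Fin.val_one']
        have h : 1 < n + 1 := by have := i.isLt; omega
        rw [Nat.mod_eq_of_lt h]
        have hilt := i.isLt
        rw [Nat.add_comm, Nat.mod_eq_sub_mod (by omega), Nat.mod_eq_of_lt] <;> omega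
      have h := hmid i.val h1 (by have := i.isLt; omega)
      rw [hC i] at h
      show M.IsBase ((B i \ A' i.val) ∪ A' (i - 1).val)
      rwa [hval]
end

section
/- (Multiple symmetric exchange property.) For every matroid M, every pair of bases B₁, B₂ of M, and every subset A₁ ⊆ B₁, there exists a subset A₂ ⊆ B₂ such that both (B₁ \ A₁) ∪ A₂ and (B₂ \ A₂) ∪ A₁ are bases of M. -/
open Set

section MSEAux

variable {α : Type*} {M : Matroid α}

/-- Rank of a set: the cardinality of any maximal independent subset. -/
noncomputable def mseRk (M : Matroid α) (X : Set α) : ℕ := (M.exists_isBasis' X).choose.ncard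

lemma mseRk_eq {I X : Set α} (hI : M.IsBasis' I X) : mseRk M X = I.ncard := by
  have hspec : M.IsBasis' (M.exists_isBasis' X).choose X := (M.exists_isBasis' X).choose_spec
  have hEq := hspec.encard_eq_encard hI
  rw [mseRk, Set.ncard_def, hEq, ← Set.ncard_def]

lemma mse_fin (hM : M.Finite) {X : Set α} (hX : X ⊆ M.E) : X.Finite :=
  hM.ground_finite.subset hX

lemma mse_indep_ncard_le (hM : M.Finite) {I X : Set α} (hI : M.Indep I) (hIX : I ⊆ X) :
    I.ncard ≤ mseRk M X := by
  obtain ⟨J, hJ, hIJ⟩ := hI.subset_isBasis'_of_subset hIX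
  rw [mseRk_eq hJ]
  exact Set.ncard_le_ncard hIJ (mse_fin hM hJ.indep.subset_ground)

lemma mseRk_indep (hI : M.Indep I) : mseRk M I = I.ncard :=
  mseRk_eq hI.isBasis_self.isBasis'

lemma mseRk_mono (hM : M.Finite) {X Y : Set α} (hXY : X ⊆ Y) : mseRk M X ≤ mseRk M Y := by
  obtain ⟨I, hI⟩ := M.exists_isBasis' X
  rw [mseRk_eq hI]
  exact mse_indep_ncard_le hM hI.indep (hI.subset.trans hXY)

lemma mseRk_submod (hM : M.Finite) (X Y : Set α) :
    mseRk M (X ∪ Y) + mseRk M (X ∩ Y) ≤ mseRk M X + mseRk M Y := by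
  obtain ⟨I, hI⟩ := M.exists_isBasis' (X ∩ Y)
  obtain ⟨J, hJ, hIJ⟩ := hI.indep.subset_isBasis'_of_subset
    (hI.subset.trans (Set.inter_subset_left.trans Set.subset_union_left))
  rw [mseRk_eq hJ, mseRk_eq hI]
  have hJfin : J.Finite := mse_fin hM hJ.indep.subset_ground
  have hU : (J ∩ X) ∪ (J ∩ Y) = J := by
    rw [← Set.inter_union_distrib_left]
    exact Set.inter_eq_left.mpr hJ.subset
  have hInt : (J ∩ X) ∩ (J ∩ Y) = J ∩ (X ∩ Y) := by
    ext x; simp only [Set.mem_inter_iff]; tauto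
  have hcard := Set.ncard_union_add_ncard_inter (J ∩ X) (J ∩ Y)
    (hJfin.subset Set.inter_subset_left) (hJfin.subset Set.inter_subset_left)
  rw [hU, hInt] at hcard
  have h2 : I.ncard ≤ (J ∩ (X ∩ Y)).ncard :=
    Set.ncard_le_ncard (Set.subset_inter hIJ hI.subset) (hJfin.subset Set.inter_subset_left)
  have h3 : (J ∩ X).ncard ≤ mseRk M X :=
    mse_indep_ncard_le hM (hJ.indep.subset Set.inter_subset_left) Set.inter_subset_right
  have h4 : (J ∩ Y).ncard ≤ mseRk M Y :=
    mse_indep_ncard_le hM (hJ.indep.subset Set.inter_subset_left) Set.inter_subset_right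
  omega

lemma mseRk_le_base (hM : M.Finite) {B : Set α} (hB : M.IsBase B) (X : Set α) :
    mseRk M X ≤ B.ncard := by
  obtain ⟨I, hI⟩ := M.exists_isBasis' X
  rw [mseRk_eq hI]
  obtain ⟨B', hB', hIB'⟩ := hI.indep.exists_isBase_superset
  calc I.ncard ≤ B'.ncard := Set.ncard_le_ncard hIB' (mse_fin hM hB'.subset_ground)
    _ = B.ncard := hB'.ncard_eq_ncard_of_isBase hB

lemma mse_spanning_of_rk (hM : M.Finite) {X B : Set α} (hX : X ⊆ M.E) (hB : M.IsBase B)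
    (h : B.ncard ≤ mseRk M X) : M.Spanning X := by
  obtain ⟨I, hI⟩ := M.exists_isBasis' X
  rw [mseRk_eq hI] at h
  obtain ⟨B', hB', hIB'⟩ := hI.indep.exists_isBase_superset
  have hle : B'.ncard ≤ I.ncard := by
    rw [hB'.ncard_eq_ncard_of_isBase hB]; exact h
  have hIB : I = B' := Set.eq_of_subset_of_ncard_le hIB' hle (mse_fin hM hB'.subset_ground)
  exact (Matroid.spanning_iff_exists_isBase_subset hX).mpr ⟨I, hIB ▸ hB', hI.subset⟩

lemma mse_base_of_spanning_ncard_le (hM : M.Finite) {K B : Set α} (hK : M.Spanning K)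
    (hB : M.IsBase B) (hcard : K.ncard ≤ B.ncard) : M.IsBase K := by
  obtain ⟨B', hB', hB'K⟩ := hK.exists_isBase_subset
  have hle : K.ncard ≤ B'.ncard := by
    rw [hB'.ncard_eq_ncard_of_isBase hB]; exact hcard
  have : B' = K := Set.eq_of_subset_of_ncard_le hB'K hle (mse_fin hM hK.subset_ground)
  exact this ▸ hB'

/-- The key 2-coloring lemma: if every `X ⊆ S` satisfies the rank inequality, then `S` can be
split into two parts augmenting `P` and `Q` respectively. -/
lemma mse_coloring (hM : M.Finite) (k : ℕ) :
    ∀ (m : ℕ) (S P Q : Set α), S ⊆ M.E → S.ncard = m →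
    (∀ X ⊆ S, k ≤ mseRk M (P ∪ X) + mseRk M (Q ∪ X) + (S \ X).ncard) →
    ∃ T ⊆ S, k ≤ mseRk M (P ∪ T) + mseRk M (Q ∪ (S \ T)) := by
  intro m
  induction m with
  | zero =>
    intro S P Q hSE hS0 hyp
    have hSfin : S.Finite := mse_fin hM hSE
    have hSempty : S = ∅ := (Set.ncard_eq_zero hSfin).mp hS0
    refine ⟨∅, Set.empty_subset _, ?_⟩
    have := hyp ∅ (Set.empty_subset _)
    simpa [hSempty] using this
  | succ m ih =>
    intro S P Q hSE hScard hyp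
    have hSfin : S.Finite := mse_fin hM hSE
    have hne : S.Nonempty := by
      rw [Set.nonempty_iff_ne_empty]
      intro h; rw [h] at hScard; simp at hScard
    obtain ⟨e, he⟩ := hne
    have hS'E : S \ {e} ⊆ M.E := Set.diff_subset.trans hSE
    have hS'card : (S \ {e}).ncard = m := by
      have := Set.ncard_diff_singleton_add_one he hSfin
      omega
    by_cases H1 : ∀ X ⊆ S \ {e},
        k ≤ mseRk M ((insert e P) ∪ X) + mseRk M (Q ∪ X) + ((S \ {e}) \ X).ncard
    · obtain ⟨T, hTS', hT⟩ := ih (S \ {e}) (insert e P) Q hS'E hS'card H1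
      have heT : e ∉ T := fun h => (hTS' h).2 rfl
      refine ⟨insert e T, Set.insert_subset he (hTS'.trans Set.diff_subset), ?_⟩
      have h1 : P ∪ insert e T = insert e P ∪ T := by
        ext x; simp only [Set.mem_union, Set.mem_insert_iff]; tauto
      have h2 : S \ insert e T = (S \ {e}) \ T := by
        ext x
        simp only [Set.mem_diff, Set.mem_insert_iff, Set.mem_singleton_iff, not_or]
        tauto
      rw [h1, h2]; exact hT
    by_cases H2 : ∀ X ⊆ S \ {e},
        k ≤ mseRk M (P ∪ X) + mseRk M ((insert e Q) ∪ X) + ((S \ {e}) \ X).ncard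
    · obtain ⟨T, hTS', hT⟩ := ih (S \ {e}) P (insert e Q) hS'E hS'card H2
      have heT : e ∉ T := fun h => (hTS' h).2 rfl
      refine ⟨T, hTS'.trans Set.diff_subset, ?_⟩
      have h2 : Q ∪ (S \ T) = insert e Q ∪ ((S \ {e}) \ T) := by
        ext x
        simp only [Set.mem_union, Set.mem_diff, Set.mem_insert_iff, Set.mem_singleton_iff]
        constructor
        · rintro (hx | ⟨hxS, hxT⟩)
          · exact Or.inl (Or.inr hx)
          · by_cases hxe : x = e
            · exact Or.inl (Or.inl hxe)
            · exact Or.inr ⟨⟨hxS, hxe⟩, hxT⟩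
        · rintro ((rfl | hx) | ⟨⟨hxS, _⟩, hxT⟩)
          · exact Or.inr ⟨he, heT⟩
          · exact Or.inl hx
          · exact Or.inr ⟨hxS, hxT⟩
      rw [h2]; exact hT
    exfalso
    push_neg at H1 H2
    obtain ⟨X₁, hX₁S, h1⟩ := H1
    obtain ⟨X₂, hX₂S, h2⟩ := H2
    have he1 : e ∉ X₁ := fun h => (hX₁S h).2 rfl
    have he2 : e ∉ X₂ := fun h => (hX₂S h).2 rfl
    have hX₁fin : X₁.Finite := hSfin.subset (hX₁S.trans Set.diff_subset)
    have hX₂fin : X₂.Finite := hSfin.subset (hX₂S.trans Set.diff_subset)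
    -- submodularity on the P side
    have sub1 : mseRk M (P ∪ (X₁ ∪ X₂ ∪ {e})) + mseRk M (P ∪ (X₁ ∩ X₂)) ≤
        mseRk M (insert e P ∪ X₁) + mseRk M (P ∪ X₂) := by
      have hsm := mseRk_submod hM (insert e P ∪ X₁) (P ∪ X₂)
      have hu : mseRk M (P ∪ (X₁ ∪ X₂ ∪ {e})) ≤ mseRk M ((insert e P ∪ X₁) ∪ (P ∪ X₂)) := by
        apply mseRk_mono hM
        intro x hx
        simp only [Set.mem_union, Set.mem_insert_iff, Set.mem_singleton_iff] at *
        tauto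
      have hi : mseRk M (P ∪ (X₁ ∩ X₂)) ≤ mseRk M ((insert e P ∪ X₁) ∩ (P ∪ X₂)) := by
        apply mseRk_mono hM
        intro x hx
        simp only [Set.mem_union, Set.mem_inter_iff, Set.mem_insert_iff] at *
        tauto
      omega
    -- submodularity on the Q side
    have sub2 : mseRk M (Q ∪ (X₁ ∪ X₂ ∪ {e})) + mseRk M (Q ∪ (X₁ ∩ X₂)) ≤
        mseRk M (Q ∪ X₁) + mseRk M (insert e Q ∪ X₂) := by
      have hsm := mseRk_submod hM (insert e Q ∪ X₂) (Q ∪ X₁)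
      have hu : mseRk M (Q ∪ (X₁ ∪ X₂ ∪ {e})) ≤ mseRk M ((insert e Q ∪ X₂) ∪ (Q ∪ X₁)) := by
        apply mseRk_mono hM
        intro x hx
        simp only [Set.mem_union, Set.mem_insert_iff, Set.mem_singleton_iff] at *
        tauto
      have hi : mseRk M (Q ∪ (X₁ ∩ X₂)) ≤ mseRk M ((insert e Q ∪ X₂) ∩ (Q ∪ X₁)) := by
        apply mseRk_mono hM
        intro x hx
        simp only [Set.mem_union, Set.mem_inter_iff, Set.mem_insert_iff] at *
        tauto
      omega
    -- cardinality bookkeeping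
    have c1 : ((S \ {e}) \ X₁).ncard + ((S \ {e}) \ X₂).ncard =
        ((S \ {e}) \ (X₁ ∪ X₂)).ncard + ((S \ {e}) \ (X₁ ∩ X₂)).ncard := by
      have hUn : ((S \ {e}) \ X₁) ∪ ((S \ {e}) \ X₂) = (S \ {e}) \ (X₁ ∩ X₂) :=
        Set.diff_inter.symm
      have hIn : ((S \ {e}) \ X₁) ∩ ((S \ {e}) \ X₂) = (S \ {e}) \ (X₁ ∪ X₂) :=
        Set.diff_inter_diff
      have := Set.ncard_union_add_ncard_inter ((S \ {e}) \ X₁) ((S \ {e}) \ X₂)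
        ((hSfin.subset Set.diff_subset).subset Set.diff_subset)
        ((hSfin.subset Set.diff_subset).subset Set.diff_subset)
      rw [hUn, hIn] at this
      omega
    have c2 : (S \ (X₁ ∪ X₂ ∪ {e})).ncard = ((S \ {e}) \ (X₁ ∪ X₂)).ncard := by
      congr 1
      ext x
      simp only [Set.mem_diff, Set.mem_union, Set.mem_singleton_iff, not_or]
      tauto
    have c3 : (S \ (X₁ ∩ X₂)).ncard = ((S \ {e}) \ (X₁ ∩ X₂)).ncard + 1 := by
      have hmem : e ∈ S \ (X₁ ∩ X₂) := ⟨he, fun h => he1 h.1⟩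
      have hset : insert e ((S \ {e}) \ (X₁ ∩ X₂)) = S \ (X₁ ∩ X₂) := by
        rw [Set.diff_diff_comm, Set.insert_diff_singleton, Set.insert_eq_self.mpr hmem]
      have hnm : e ∉ (S \ {e}) \ (X₁ ∩ X₂) := fun h => h.1.2 rfl
      rw [← hset, Set.ncard_insert_of_notMem hnm
        ((hSfin.subset Set.diff_subset).subset Set.diff_subset)]
    have m1 := hyp (X₁ ∪ X₂ ∪ {e})
      (Set.union_subset (Set.union_subset (hX₁S.trans Set.diff_subset)
        (hX₂S.trans Set.diff_subset)) (Set.singleton_subset_iff.mpr he))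
    have m2 := hyp (X₁ ∩ X₂) ((Set.inter_subset_left).trans (hX₁S.trans Set.diff_subset))
    omega

end MSEAux

/-- **Multiple symmetric exchange property.**
For every (finite) matroid `M`, every pair of bases `B₁, B₂` of `M`, and every
subset `A₁ ⊆ B₁`, there exists `A₂ ⊆ B₂` such that both `(B₁ \ A₁) ∪ A₂` and
`(B₂ \ A₂) ∪ A₁` are bases of `M`. -/
theorem multiple_symmetric_exchange {α : Type*} (M : Matroid α) (hM : M.Finite)
    (B₁ B₂ : Set α) (hB₁ : M.IsBase B₁) (hB₂ : M.IsBase B₂)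
    (A₁ : Set α) (hA₁ : A₁ ⊆ B₁) :
    ∃ A₂ : Set α, A₂ ⊆ B₂ ∧ M.IsBase ((B₁ \ A₁) ∪ A₂) ∧ M.IsBase ((B₂ \ A₂) ∪ A₁) := by
  classical
  have hB1E := hB₁.subset_ground
  have hB2E := hB₂.subset_ground
  have hfinB₁ : B₁.Finite := mse_fin hM hB1E
  have hfinB₂ : B₂.Finite := mse_fin hM hB2E
  set n := B₁.ncard with hn
  have hB₂n : B₂.ncard = n := hB₂.ncard_eq_ncard_of_isBase hB₁
  set P := B₁ \ A₁ with hP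
  have hPQ : P ∪ A₁ = B₁ := Set.diff_union_of_subset hA₁
  -- hypothesis for the coloring lemma
  have hyp : ∀ X ⊆ B₂, 2 * n ≤ mseRk M (P ∪ X) + mseRk M (A₁ ∪ X) + (B₂ \ X).ncard := by
    intro X hX
    have hXind : M.Indep X := hB₂.indep.subset hX
    have hsub := mseRk_submod hM (P ∪ X) (A₁ ∪ X)
    have h1 : mseRk M B₁ ≤ mseRk M ((P ∪ X) ∪ (A₁ ∪ X)) := by
      apply mseRk_mono hM
      rw [← hPQ]
      intro x hx
      simp only [Set.mem_union] at *
      tauto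
    have h2 : mseRk M X ≤ mseRk M ((P ∪ X) ∩ (A₁ ∪ X)) :=
      mseRk_mono hM (Set.subset_inter Set.subset_union_right Set.subset_union_right)
    have h3 : mseRk M B₁ = n := by rw [mseRk_indep hB₁.indep]
    have h4 : mseRk M X = X.ncard := mseRk_indep hXind
    have h5 : (B₂ \ X).ncard + X.ncard = n := by
      rw [Set.ncard_diff_add_ncard_of_subset hX hfinB₂]
      exact hB₂n
    omega
  obtain ⟨T, hTB₂, hT⟩ := mse_coloring hM (2 * n) B₂.ncard B₂ P A₁ hB2E rfl hyp
  have hb1 : mseRk M (P ∪ T) ≤ n := mseRk_le_base hM hB₁ _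
  have hb2 : mseRk M (A₁ ∪ (B₂ \ T)) ≤ n := mseRk_le_base hM hB₁ _
  have hsp1 : M.Spanning (P ∪ T) :=
    mse_spanning_of_rk hM (Set.union_subset (Set.diff_subset.trans hB1E) (hTB₂.trans hB2E))
      hB₁ (by omega)
  have hsp2 : M.Spanning (A₁ ∪ (B₂ \ T)) :=
    mse_spanning_of_rk hM (Set.union_subset (hA₁.trans hB1E) (Set.diff_subset.trans hB2E))
      hB₁ (by omega)
  -- trim the first spanning set to a base containing P
  obtain ⟨B', hB', hB'sub⟩ := hsp1.exists_isBase_subset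
  have hPind : M.Indep P := hB₁.indep.subset Set.diff_subset
  obtain ⟨J, hJ, hPJ, hJsub⟩ := hPind.exists_isBase_subset_union_isBase hB'
  have hJsub2 : J ⊆ P ∪ T := hJsub.trans (Set.union_subset Set.subset_union_left hB'sub)
  set A₂ := J \ P with hA₂def
  have hA₂T : A₂ ⊆ T := fun x hx => ((hJsub2 hx.1).resolve_left hx.2)
  have hA₂B₂ : A₂ ⊆ B₂ := hA₂T.trans hTB₂
  have hJeq : P ∪ A₂ = J := Set.union_diff_cancel hPJ
  refine ⟨A₂, hA₂B₂, ?_, ?_⟩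
  · rw [hJeq]; exact hJ
  · -- the second set is spanning and small, hence a base
    have hKE : (B₂ \ A₂) ∪ A₁ ⊆ M.E :=
      Set.union_subset (Set.diff_subset.trans hB2E) (hA₁.trans hB1E)
    have hKsp : M.Spanning ((B₂ \ A₂) ∪ A₁) := by
      apply hsp2.superset _ hKE
      intro x hx
      rcases hx with hx | hx
      · exact Or.inr hx
      · exact Or.inl ⟨hx.1, fun h => hx.2 (hA₂T h)⟩
    have hKle : ((B₂ \ A₂) ∪ A₁).ncard ≤ (B₂ \ A₂).ncard + A₁.ncard :=
      Set.ncard_union_le _ _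
    have e1 : (B₂ \ A₂).ncard + A₂.ncard = n := by
      rw [Set.ncard_diff_add_ncard_of_subset hA₂B₂ hfinB₂]
      exact hB₂n
    have e2 : P.ncard + A₁.ncard = n := by
      rw [hP, Set.ncard_diff_add_ncard_of_subset hA₁ hfinB₁]
    have e3 : P.ncard + A₂.ncard = n := by
      have hdisj : Disjoint P A₂ := Set.disjoint_sdiff_right
      have hfinP : P.Finite := hfinB₁.subset Set.diff_subset
      have hfinA₂ : A₂.Finite := hfinB₂.subset hA₂B₂
      have hcard : (P ∪ A₂).ncard = P.ncard + A₂.ncard :=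
        Set.ncard_union_eq hdisj hfinP hfinA₂
      rw [← hcard, hJeq]
      exact hJ.ncard_eq_ncard_of_isBase hB₁
    exact mse_base_of_spanning_ncard_le hM hKsp hB₁ (by omega)
end

section
/- (Single-element cyclic exchange property.) For every positive integer k, every matroid M, every collection of bases B₁, …, B_k of M, and every element e₁ ∈ B₁, there exist elements e₂ ∈ B₂, …, e_k ∈ B_k such that for every i (indices taken cyclically modulo k), the set (B_i \ {e_i}) ∪ {e_{i−1}} is a basis of M. -/
open Set
open Fin.NatCast

lemma sym_exch {α : Type*} {M : Matroid α} (hM : M.Finite) {A B : Set α}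
    (hA : M.IsBase A) (hB : M.IsBase B) {e : α} (he : e ∈ A) :
    ∃ f ∈ B, f ∉ A \ {e} ∧ M.IsBase (insert f (A \ {e})) ∧ M.IsBase (insert e (B \ {f})) := by
  have hAeq : insert e (A \ {e}) = A := by
    rw [insert_diff_singleton, insert_eq_of_mem he]
  by_cases heB : e ∈ B
  · refine ⟨e, heB, by simp, ?_, ?_⟩
    · rwa [hAeq]
    · rwa [insert_diff_singleton, insert_eq_of_mem heB]
  haveI := hM
  have heE : e ∈ M.E := hA.subset_ground he
  have hBfin : B.Finite := M.set_finite B hB.subset_ground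
  -- minimal subset of B whose closure contains e
  set S : Set (Set α) := {X | X ⊆ B ∧ e ∈ M.closure X} with hS
  have hSfin : S.Finite := hBfin.finite_subsets.subset (fun X hX => hX.1)
  have hSne : S.Nonempty := ⟨B, rfl.subset, by rw [hB.closure_eq]; exact heE⟩
  obtain ⟨B', hB'S, hB'min⟩ := Set.exists_min_image S Set.ncard hSfin hSne
  have hB'B : B' ⊆ B := hB'S.1
  have hB'fin : B'.Finite := hBfin.subset hB'B
  -- every element of B' is "good" for B
  have hgood : ∀ f ∈ B', e ∉ M.closure (B \ {f}) := by
    intro f hf hcon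
    have h1 : e ∉ M.closure (B' \ {f}) := by
      intro h
      have hmem : B' \ {f} ∈ S := ⟨(diff_subset).trans hB'B, h⟩
      have := hB'min _ hmem
      have hlt : (B' \ {f}).ncard < B'.ncard := ncard_diff_singleton_lt_of_mem hf hB'fin
      omega
    have h2 : e ∈ M.closure (insert f (B' \ {f})) := by
      rw [insert_diff_singleton, insert_eq_of_mem hf]; exact hB'S.2
    have h3 := Matroid.closure_exchange ⟨h2, h1⟩
    have h4 : f ∈ M.closure (B \ {f}) := by
      have : M.closure (insert e (B' \ {f})) ⊆ M.closure (insert e (B \ {f})) :=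
        M.closure_subset_closure (insert_subset_insert (diff_subset_diff_left hB'B))
      have h5 := this h3.1
      rwa [Matroid.closure_insert_eq_of_mem_closure hcon] at h5
    exact hB.indep.notMem_closure_diff_of_mem (hB'B hf) h4
  -- find f in B' outside closure of A \ {e}
  have hne : ¬ (B' ⊆ M.closure (A \ {e})) := by
    intro hcon
    have : e ∈ M.closure (A \ {e}) := by
      have h1 : M.closure B' ⊆ M.closure (A \ {e}) :=
        Matroid.closure_subset_closure_of_subset_closure hcon
      exact h1 hB'S.2
    exact hA.indep.notMem_closure_diff_of_mem he this
  obtain ⟨f, hfB', hfcl⟩ := not_subset.1 hne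
  have hfB : f ∈ B := hB'B hfB'
  have hfe : f ≠ e := fun h => heB (h ▸ hfB)
  have hfA : f ∉ A := fun h => hfcl (M.subset_closure _ (diff_subset.trans hA.subset_ground) ⟨h, hfe⟩)
  have hfE : f ∈ M.E := hB.subset_ground hfB
  refine ⟨f, hfB, fun h => hfA h.1, ?_, ?_⟩
  · refine hA.exchange_isBase_of_indep hfA ?_
    have hind : M.Indep (A \ {e}) := hA.indep.subset diff_subset
    rw [hind.insert_indep_iff]
    exact Or.inl ⟨hfE, hfcl⟩
  · refine hB.exchange_isBase_of_indep heB ?_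
    have hind : M.Indep (B \ {f}) := hB.indep.subset diff_subset
    rw [hind.insert_indep_iff]
    exact Or.inl ⟨heE, hgood f hfB'⟩

lemma cyc_aux {α : Type*} {M : Matroid α} (hM : M.Finite) :
    ∀ (n : ℕ) (B : ℕ → Set α), (∀ i, M.IsBase (B i)) → ∀ e₁, e₁ ∈ B 0 →
    ∃ e : ℕ → α, e 0 = e₁ ∧ (∀ i ≤ n, e i ∈ B i) ∧
      (∀ i, 1 ≤ i → i ≤ n → M.IsBase (insert (e (i-1)) (B i \ {e i}))) ∧
      M.IsBase (insert (e n) (B 0 \ {e₁})) := by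
  intro n
  induction n with
  | zero =>
    intro B hB e₁ he₁
    refine ⟨fun _ => e₁, rfl, ?_, by omega, ?_⟩
    · intro i hi; interval_cases i; exact he₁
    · rw [insert_diff_singleton, insert_eq_of_mem he₁]; exact hB 0
  | succ n ih =>
    intro B hB e₁ he₁
    obtain ⟨f, hfB1, hfnot, hbase0, hbase1⟩ := sym_exch hM (hB 0) (hB 1) he₁
    set B' : ℕ → Set α := fun i => if i = 0 then insert f (B 0 \ {e₁}) else B (i+1) with hB'def
    have hB' : ∀ i, M.IsBase (B' i) := by
      intro i
      by_cases h : i = 0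
      · simpa [hB'def, h] using hbase0
      · simpa [hB'def, h] using hB (i+1)
    have hfB'0 : f ∈ B' 0 := by simp [hB'def]
    obtain ⟨e', he'0, he'mem, he'chain, he'final⟩ := ih B' hB' f hfB'0
    refine ⟨fun i => if i = 0 then e₁ else e' (i-1), by simp, ?_, ?_, ?_⟩
    · intro i hi
      rcases Nat.eq_zero_or_pos i with rfl | hpos
      · simpa using he₁
      have hi1 : i ≠ 0 := by omega
      simp only [hi1, if_false]
      rcases Nat.eq_or_lt_of_le hpos with h1 | h2
      · rw [← h1]; simpa [he'0] using hfB1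
      · have := he'mem (i-1) (by omega)
        have hne : i - 1 ≠ 0 := by omega
        simp only [hB'def, hne, if_false] at this
        have : e' (i-1) ∈ B (i-1+1) := this
        rwa [Nat.sub_add_cancel hpos] at this
    · intro i h1 h2
      rcases Nat.eq_or_lt_of_le h1 with h | h
      · rw [← h]; simpa [he'0] using hbase1
      · have hi0 : i ≠ 0 := by omega
        have hi10 : i - 1 ≠ 0 := by omega
        have hc := he'chain (i-1) (by omega) (by omega)
        simp only [hB'def, hi10, if_false] at hc
        rw [Nat.sub_add_cancel (by omega : 1 ≤ i)] at hc
        simpa only [hi0, hi10, if_false] using hc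
    · have hd : B' 0 \ {f} = B 0 \ {e₁} := by
        simp only [hB'def, if_true]
        rw [insert_diff_self_of_notMem hfnot]
      rw [hd] at he'final
      simpa using he'final

/-- **Single-element cyclic exchange property.**
For every positive integer `k`, every (finite) matroid `M`, every collection of bases
`B 0, …, B (k-1)` of `M`, and every element `e₁ ∈ B 0`, there exist elements
`e i ∈ B i` with `e 0 = e₁` such that for every `i` (indices cyclic mod `k`),
the set `(B i \ {e i}) ∪ {e (i-1)}` is a basis of `M`. -/
theorem single_cyclic_exchange {α : Type*} {k : ℕ} [NeZero k]
    (M : Matroid α) (hM : M.Finite)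
    (B : Fin k → Set α) (hB : ∀ i, M.IsBase (B i))
    (e₁ : α) (he₁ : e₁ ∈ B 0) :
    ∃ e : Fin k → α, e 0 = e₁ ∧ (∀ i, e i ∈ B i) ∧
      ∀ i : Fin k, M.IsBase ((B i \ {e i}) ∪ {e (i - 1)}) := by
  obtain ⟨n, rfl⟩ : ∃ n, k = n + 1 := ⟨k - 1, (Nat.succ_pred_eq_of_pos (NeZero.pos k)).symm⟩
  set Bn : ℕ → Set α := fun i => B (i : Fin (n+1)) with hBn
  have hBn0 : Bn 0 = B 0 := by simp [hBn]
  obtain ⟨e', he'0, he'mem, he'chain, he'final⟩ :=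
    cyc_aux hM n Bn (fun i => hB _) e₁ (hBn0 ▸ he₁)
  refine ⟨fun i => e' i.val, by simpa using he'0, ?_, ?_⟩
  · intro i
    have := he'mem i.val (by omega)
    simpa [hBn, Fin.cast_val_eq_self] using this
  · intro i
    rw [union_singleton]
    by_cases h0 : i = 0
    · subst h0
      simp only [Fin.coe_sub_one]
      simp only [if_true, Fin.val_zero, he'0, eq_self_iff_true, if_pos rfl]
      have : Bn 0 = B 0 := hBn0
      rw [← this]
      exact he'final
    · have h1 : 1 ≤ i.val := by
        have := Fin.pos_of_ne_zero h0; omega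
      have hc := he'chain i.val h1 (by omega)
      simp only [Fin.coe_sub_one, if_neg h0]
      simpa [hBn, Fin.cast_val_eq_self] using hc
end

section
/- Let M be a matroid with rank function r, let B₁, …, B_k (k ≥ 2) be pairwise disjoint bases of M, and let A₁ ⊆ B₁. Define C₁ = B_k ∪ (B₁ \ A₁), C₂ = A₁ ∪ B₂, and C_i = B_{i−1} ∪ B_i for i = 3, …, k. Then for every subset A ⊆ B₁ ∪ ⋯ ∪ B_k, the inequality r(A ∩ C₁) + r(A ∩ C₂) + ⋯ + r(A ∩ C_k) ≥ |A| holds. -/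
/-- The rank of a set `S` in a matroid `M` : the maximum cardinality of an
independent subset of `S`. -/
noncomputable def matroidRank {α : Type*} (M : Matroid α) (S : Set α) : ℕ :=
  sSup {n : ℕ | ∃ I : Set α, I ⊆ S ∧ M.Indep I ∧ I.ncard = n}

section Aux

open Set

variable {α : Type*} {M : Matroid α}

lemma mr_basis [M.Finite] {I X : Set α} (h : M.IsBasis I X) : matroidRank M X = I.ncard := by
  have hXE := h.subset_ground
  apply IsGreatest.csSup_eq
  constructor
  · exact ⟨I, h.subset, h.indep, rfl⟩
  · rintro n ⟨J, hJX, hJ, rfl⟩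
    obtain ⟨J', hJ', hJJ'⟩ := hJ.subset_isBasis_of_subset hJX hXE
    have hJ'fin : J'.Finite := M.set_finite J' hJ'.indep.subset_ground
    have hcard : J'.ncard = I.ncard := by
      rw [Set.ncard_def, Set.ncard_def, hJ'.encard_eq_encard h]
    exact le_trans (Set.ncard_le_ncard hJJ' hJ'fin) hcard.le

lemma mr_le [M.Finite] {I X : Set α} (hI : M.Indep I) (hIX : I ⊆ X) (hXE : X ⊆ M.E) :
    I.ncard ≤ matroidRank M X := by
  obtain ⟨J, hJ, hIJ⟩ := hI.subset_isBasis_of_subset hIX hXE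
  rw [mr_basis hJ]
  exact Set.ncard_le_ncard hIJ (M.set_finite J hJ.indep.subset_ground)

lemma mr_mono [M.Finite] {X Y : Set α} (hXY : X ⊆ Y) (hYE : Y ⊆ M.E) :
    matroidRank M X ≤ matroidRank M Y := by
  obtain ⟨I, hI⟩ := M.exists_isBasis X (hXY.trans hYE)
  rw [mr_basis hI]
  exact mr_le hI.indep (hI.subset.trans hXY) hYE

lemma mr_submod [M.Finite] {X Y P : Set α} (hX : X ⊆ M.E) (hY : Y ⊆ M.E)
    (hP : M.Indep P) (hPX : P ⊆ X) (hPY : P ⊆ Y) :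
    matroidRank M (X ∪ Y) + P.ncard ≤ matroidRank M X + matroidRank M Y := by
  have hXY : X ∪ Y ⊆ M.E := union_subset hX hY
  obtain ⟨I, hI, hPI⟩ := hP.subset_isBasis_of_subset (subset_inter hPX hPY)
    (inter_subset_left.trans hX)
  obtain ⟨J, hJ, hIJ⟩ := hI.indep.subset_isBasis_of_subset
    (hI.subset.trans (inter_subset_left.trans subset_union_left)) hXY
  rw [mr_basis hJ]
  have hJfin : J.Finite := M.set_finite J hJ.indep.subset_ground
  have h1 : (J ∩ X).ncard ≤ matroidRank M X :=
    mr_le (hJ.indep.subset inter_subset_left) inter_subset_right hX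
  have h2 : (J ∩ Y).ncard ≤ matroidRank M Y :=
    mr_le (hJ.indep.subset inter_subset_left) inter_subset_right hY
  have hu : (J ∩ X) ∪ (J ∩ Y) = J := by
    rw [← Set.inter_union_distrib_left]
    exact Set.inter_eq_left.mpr hJ.subset
  have hcard : (J ∩ X).ncard + (J ∩ Y).ncard
      = J.ncard + ((J ∩ X) ∩ (J ∩ Y)).ncard := by
    rw [← Set.ncard_union_add_ncard_inter (J ∩ X) (J ∩ Y)
      (hJfin.subset inter_subset_left) (hJfin.subset inter_subset_left), hu]
  have hPsub : P ⊆ (J ∩ X) ∩ (J ∩ Y) := by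
    intro x hx
    exact ⟨⟨hIJ (hPI hx), hPX hx⟩, hIJ (hPI hx), hPY hx⟩
  have hPcard : P.ncard ≤ ((J ∩ X) ∩ (J ∩ Y)).ncard :=
    Set.ncard_le_ncard hPsub (hJfin.subset (inter_subset_left.trans inter_subset_left))
  omega

lemma ncard_biUnion_le (Q : ℕ → Set α) (hfin : ∀ j, (Q j).Finite) :
    ∀ n, (⋃ j ∈ Finset.range n, Q j).ncard ≤ ∑ j ∈ Finset.range n, (Q j).ncard := by
  intro n
  induction n with
  | zero => simp
  | succ n ih =>
    rw [Finset.range_add_one, Finset.set_biUnion_insert, Finset.sum_insert (by simp)]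
    refine le_trans (Set.ncard_union_le _ _) ?_
    exact add_le_add le_rfl ih

lemma mr_chain [M.Finite] (R E' : ℕ → Set α)
    (hRE : ∀ j, R j ⊆ M.E) (hE'E : ∀ j, E' j ⊆ M.E)
    (hind : ∀ j, M.Indep (R j))
    (hsub : ∀ j, R j ⊆ E' j) (hsub' : ∀ j, R (j + 1) ⊆ E' j) (m : ℕ) :
    matroidRank M (⋃ j ∈ Finset.range (m + 2), R j) + ∑ j ∈ Finset.Ico 1 (m + 1), (R j).ncard
      ≤ ∑ j ∈ Finset.range (m + 1), matroidRank M (E' j) := by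
  induction m with
  | zero =>
    simp only [Finset.Ico_self, Finset.sum_empty, add_zero, Finset.range_one,
      Finset.sum_singleton]
    have h2 : (⋃ j ∈ Finset.range 2, R j) = R 1 ∪ (R 0 ∪ ∅) := by
      rw [show (2 : ℕ) = 1 + 1 from rfl, Finset.range_add_one, Finset.set_biUnion_insert,
        Finset.range_add_one, Finset.set_biUnion_insert, Finset.range_zero]
      simp
    rw [h2]
    refine mr_mono ?_ (hE'E 0)
    rw [Set.union_empty]
    exact Set.union_subset (hsub' 0) (hsub 0)
  | succ m ih =>
    have hUE : (⋃ j ∈ Finset.range (m + 2), R j) ⊆ M.E :=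
      Set.iUnion₂_subset fun j _ => hRE j
    have hRU : R (m + 1) ⊆ ⋃ j ∈ Finset.range (m + 2), R j :=
      Set.subset_biUnion_of_mem (Finset.self_mem_range_succ (m+1))
    have h1 := mr_submod hUE (hE'E (m + 1)) (hind (m + 1)) hRU (hsub (m + 1))
    have hmono : matroidRank M (⋃ j ∈ Finset.range (m + 1 + 2), R j)
        ≤ matroidRank M ((⋃ j ∈ Finset.range (m + 2), R j) ∪ E' (m + 1)) := by
      refine mr_mono ?_ (Set.union_subset hUE (hE'E (m + 1)))
      rw [show m + 1 + 2 = (m + 2) + 1 from rfl, Finset.range_add_one, Finset.set_biUnion_insert]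
      exact Set.union_subset ((hsub' (m + 1)).trans subset_union_right)
        subset_union_left
    rw [Finset.sum_range_succ, Finset.sum_Ico_succ_top (by omega)]
    omega

end Aux

set_option maxHeartbeats 2000000 in
/-- Let `B 0, …, B (k-1)` (`k ≥ 2`) be pairwise disjoint bases of a finite matroid `M`,
and `A₁ ⊆ B 0`.  With `C 0 = B (k-1) ∪ (B 0 \ A₁)`, `C 1 = A₁ ∪ B 1`, and
`C i = B (i-1) ∪ B i` for `i ≥ 2`, every `A ⊆ B 0 ∪ ⋯ ∪ B (k-1)` satisfies
`r (A ∩ C 0) + ⋯ + r (A ∩ C (k-1)) ≥ |A|`. -/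
theorem rank_sum_inequality {α : Type*} {k : ℕ} [NeZero k] (hk : 2 ≤ k)
    (M : Matroid α) (hM : M.Finite)
    (B : Fin k → Set α) (hB : ∀ i, M.IsBase (B i))
    (hdisj : ∀ i j : Fin k, i ≠ j → Disjoint (B i) (B j))
    (A₁ : Set α) (hA₁ : A₁ ⊆ B 0)
    (C : Fin k → Set α)
    (hC0 : C 0 = B (0 - 1) ∪ (B 0 \ A₁))
    (hC1 : C 1 = A₁ ∪ B 1)
    (hCi : ∀ i : Fin k, 2 ≤ (i : ℕ) → C i = B (i - 1) ∪ B i)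
    (A : Set α) (hA : A ⊆ ⋃ i, B i) :
    A.ncard ≤ ∑ i : Fin k, matroidRank M (A ∩ C i) := by
  haveI := hM
  classical
  have h1v : ((1 : Fin k) : ℕ) = 1 := by
    rw [Fin.val_one']; exact Nat.mod_eq_of_lt (by omega)
  -- restated structural facts about `C`, with `Fin.mk` indices
  have hC0' : C 0 = B ⟨k - 1, by omega⟩ ∪ (B 0 \ A₁) := by
    have hm1 : (0 - 1 : Fin k) = ⟨k - 1, by omega⟩ := by
      apply Fin.ext
      rw [Fin.sub_def, Fin.val_mk, h1v, Fin.val_zero, Nat.add_zero]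
      exact Nat.mod_eq_of_lt (by omega)
    rw [hC0, hm1]
  have hA₁C : ∀ (h : 1 < k), A₁ ⊆ C ⟨1, h⟩ := by
    intro h
    have hone : (⟨1, h⟩ : Fin k) = 1 := Fin.ext h1v.symm
    rw [hone, hC1]
    exact Set.subset_union_left
  have hCj' : ∀ (j : ℕ) (h1 : 1 ≤ j) (h : j + 1 < k),
      C ⟨j + 1, h⟩ = B ⟨j, by omega⟩ ∪ B ⟨j + 1, h⟩ := by
    intro j hj h
    have hsub1 : (⟨j + 1, h⟩ - 1 : Fin k) = ⟨j, by omega⟩ := by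
      apply Fin.ext
      rw [Fin.sub_def, Fin.val_mk, h1v,
        show k - 1 + (j + 1) = k + j from by omega, Nat.add_mod_left]
      exact Nat.mod_eq_of_lt (by omega)
    have h2le : 2 ≤ ((⟨j + 1, h⟩ : Fin k) : ℕ) := by
      rw [Fin.val_mk]; omega
    rw [hCi _ h2le, hsub1]
  have hBC : ∀ (j : ℕ) (h : j + 1 < k), B ⟨j + 1, h⟩ ⊆ C ⟨j + 1, h⟩ := by
    intro j h
    by_cases hj : 1 ≤ j
    · rw [hCj' j hj h]
      exact Set.subset_union_right
    · have hj0 : j = 0 := by omega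
      subst hj0
      have hone : (⟨0 + 1, h⟩ : Fin k) = 1 := Fin.ext h1v.symm
      rw [hone, hC1]
      exact Set.subset_union_right
  have hBC2 : ∀ (j : ℕ) (h1 : 1 ≤ j) (h : j + 1 < k),
      B ⟨j, by omega⟩ ⊆ C ⟨j + 1, h⟩ := by
    intro j hj h
    rw [hCj' j hj h]
    exact Set.subset_union_left
  have hBE : ∀ i, B i ⊆ M.E := fun i => (hB i).subset_ground
  have hAE : A ⊆ M.E := hA.trans (Set.iUnion_subset fun i => hBE i)
  have hAfin : A.Finite := M.set_finite A hAE
  -- the pieces and the covering sets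
  set R : ℕ → Set α := fun j =>
    if h : j < k then (if j = 0 then A ∩ A₁ else A ∩ B ⟨j, h⟩) else ∅ with hR
  set E' : ℕ → Set α := fun j =>
    if h : j + 1 < k then A ∩ C ⟨j + 1, h⟩ else M.E with hE'
  have hRA : ∀ j, R j ⊆ A := by
    intro j
    simp only [hR]
    split
    · split <;> exact Set.inter_subset_left
    · exact Set.empty_subset _
  have hRE : ∀ j, R j ⊆ M.E := fun j => (hRA j).trans hAE
  have hE'E : ∀ j, E' j ⊆ M.E := by
    intro j
    simp only [hE']
    split
    · exact Set.inter_subset_left.trans hAE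
    · exact le_refl _
  have hind : ∀ j, M.Indep (R j) := by
    intro j
    simp only [hR]
    split
    · split
      · exact (hB 0).indep.subset (Set.inter_subset_right.trans hA₁)
      · exact (hB _).indep.subset Set.inter_subset_right
    · exact M.empty_indep
  have hsub : ∀ j, R j ⊆ E' j := by
    intro j
    simp only [hR, hE']
    split
    · rename_i hjk
      split
      · rename_i hj0
        subst hj0
        rw [dif_pos (by omega : 0 + 1 < k)]
        exact Set.inter_subset_inter_right A (hA₁C (by omega))
      · rename_i hj0
        by_cases hjk1 : j + 1 < k
        · rw [dif_pos hjk1]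
          exact Set.inter_subset_inter_right A (hBC2 j (by omega) hjk1)
        · rw [dif_neg hjk1]
          exact Set.inter_subset_left.trans hAE
    · exact Set.empty_subset _
  have hsub' : ∀ j, R (j + 1) ⊆ E' j := by
    intro j
    simp only [hR, hE']
    split
    · rename_i hjk
      exact Set.inter_subset_inter_right A (hBC j hjk)
    · exact Set.empty_subset _
  -- apply the chain lemma with m = k - 2
  have key := mr_chain R E' hRE hE'E hind hsub hsub' (k - 2)
  rw [show k - 2 + 2 = k from by omega, show k - 2 + 1 = k - 1 from by omega] at key
  set U : Set α := ⋃ j ∈ Finset.range k, R j with hU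
  have hUA : U ⊆ A := Set.iUnion₂_subset fun j _ => hRA j
  have hUE : U ⊆ M.E := hUA.trans hAE
  -- final submodularity step with P = A ∩ B (k-1)
  set P : Set α := A ∩ B ⟨k - 1, by omega⟩ with hP
  have hPR : P = R (k - 1) := by
    simp only [hR]
    rw [dif_pos (by omega : k - 1 < k), if_neg (by omega : ¬ k - 1 = 0)]
  have hPU : P ⊆ U := by
    rw [hPR]
    exact Set.subset_biUnion_of_mem (Finset.mem_range.mpr (by omega))
  have hPind : M.Indep P := by rw [hPR]; exact hind (k - 1)
  have hPD0 : P ⊆ A ∩ C 0 := by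
    rw [hC0']
    exact Set.inter_subset_inter_right A Set.subset_union_left
  have hD0E : A ∩ C 0 ⊆ M.E := Set.inter_subset_left.trans hAE
  have hsub2 := mr_submod hD0E hUE hPind hPD0 hPU
  -- A ∩ B 0 is an independent subset of (A ∩ C 0) ∪ U
  have hB0sub : A ∩ B 0 ⊆ (A ∩ C 0) ∪ U := by
    intro x hx
    by_cases hxA₁ : x ∈ A₁
    · right
      have hx0 : x ∈ R 0 := by
        simp only [hR]
        rw [dif_pos (by omega : 0 < k)]
        simp only [if_true, reduceIte]
        exact ⟨hx.1, hxA₁⟩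
      exact Set.mem_biUnion (Finset.mem_range.mpr (by omega) : (0 : ℕ) ∈ Finset.range k) hx0
    · left
      refine ⟨hx.1, ?_⟩
      rw [hC0']
      exact Or.inr ⟨hx.2, hxA₁⟩
  have hrank0 : (A ∩ B 0).ncard ≤ matroidRank M ((A ∩ C 0) ∪ U) :=
    mr_le ((hB 0).indep.subset Set.inter_subset_right) hB0sub
      (Set.union_subset hD0E hUE)
  -- counting : A.ncard ≤ ∑_{j<k} |A ∩ B j|
  set g2 : ℕ → ℕ := fun j => if h : j < k then (A ∩ B ⟨j, h⟩).ncard else 0 with hg2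
  set Q : ℕ → Set α := fun j => if h : j < k then A ∩ B ⟨j, h⟩ else ∅ with hQ
  have hQfin : ∀ j, (Q j).Finite := by
    intro j
    simp only [hQ]
    split
    · exact hAfin.subset Set.inter_subset_left
    · exact Set.finite_empty
  have hAsubQ : A ⊆ ⋃ j ∈ Finset.range k, Q j := by
    intro x hx
    obtain ⟨i, hi⟩ := Set.mem_iUnion.mp (hA hx)
    refine Set.mem_biUnion (by simp [i.isLt] : (i : ℕ) ∈ Finset.range k) ?_
    simp only [hQ]
    rw [dif_pos i.isLt]
    exact ⟨hx, by rw [Fin.eta]; exact hi⟩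
  have hcount : A.ncard ≤ ∑ j ∈ Finset.range k, g2 j := by
    have h1 : A.ncard ≤ (⋃ j ∈ Finset.range k, Q j).ncard :=
      Set.ncard_le_ncard hAsubQ (Set.Finite.biUnion (Finset.range k).finite_toSet
        fun j _ => hQfin j)
    refine le_trans (le_trans h1 (ncard_biUnion_le Q hQfin k)) (le_of_eq ?_)
    refine Finset.sum_congr rfl fun j hj => ?_
    simp only [Finset.mem_range] at hj
    simp only [hQ, hg2, dif_pos hj]
  -- rewrite the goal sum
  set g : ℕ → ℕ := fun j => if h : j < k then matroidRank M (A ∩ C ⟨j, h⟩) else 0 with hg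
  have hgoal : ∑ i : Fin k, matroidRank M (A ∩ C i) = ∑ j ∈ Finset.range k, g j := by
    rw [← Fin.sum_univ_eq_sum_range g k]
    refine Finset.sum_congr rfl fun i _ => ?_
    simp only [hg, dif_pos i.isLt, Fin.eta]
  have hsplit : ∑ j ∈ Finset.range k, g j = g 0 + ∑ j ∈ Finset.Ico 1 k, g j := by
    rw [Finset.range_eq_Ico, Finset.sum_eq_sum_Ico_succ_bot (by omega : 0 < k)]
  have hg0 : g 0 = matroidRank M (A ∩ C 0) := by
    have hzero : (⟨0, by omega⟩ : Fin k) = 0 := Fin.ext (by simp [Fin.val_zero])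
    simp only [hg, dif_pos (by omega : 0 < k)]
    rw [hzero]
  have htail : ∑ j ∈ Finset.Ico 1 k, g j = ∑ j ∈ Finset.range (k - 1), matroidRank M (E' j) := by
    rw [Finset.sum_Ico_eq_sum_range]
    refine Finset.sum_congr rfl fun j hj => ?_
    simp only [Finset.mem_range] at hj
    rw [Nat.add_comm 1 j]
    simp only [hg, hE']
    rw [dif_pos (by omega : j + 1 < k), dif_pos (by omega : j + 1 < k)]
  -- split the counting sum
  have hsplit2 : ∑ j ∈ Finset.range k, g2 j = g2 0 + ∑ j ∈ Finset.Ico 1 k, g2 j := by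
    rw [Finset.range_eq_Ico, Finset.sum_eq_sum_Ico_succ_bot (by omega : 0 < k)]
  have hg20 : g2 0 = (A ∩ B 0).ncard := by
    have hzero : (⟨0, by omega⟩ : Fin k) = 0 := Fin.ext (by simp [Fin.val_zero])
    simp only [hg2, dif_pos (by omega : 0 < k)]
    rw [hzero]
  have hsplit3 : ∑ j ∈ Finset.Ico 1 k, g2 j
      = (∑ j ∈ Finset.Ico 1 (k - 1), g2 j) + g2 (k - 1) := by
    conv_lhs => rw [show k = (k - 1) + 1 from by omega]
    rw [Finset.sum_Ico_succ_top (by omega : 1 ≤ k - 1)]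
  have hg2k1 : g2 (k - 1) = P.ncard := by
    simp only [hg2, hP, dif_pos (by omega : k - 1 < k)]
  have htail2 : ∑ j ∈ Finset.Ico 1 (k - 1), g2 j = ∑ j ∈ Finset.Ico 1 (k - 1), (R j).ncard := by
    refine Finset.sum_congr rfl fun j hj => ?_
    simp only [Finset.mem_Ico] at hj
    simp only [hg2, hR]
    rw [dif_pos (by omega : j < k), dif_pos (by omega : j < k),
      if_neg (by omega : ¬ j = 0)]
  rw [hgoal, hsplit, hg0, htail]
  rw [hsplit2, hg20, hsplit3, hg2k1, htail2] at hcount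
  omega
end

section
/- Let M be a matroid, let B₁, …, B_k (k ≥ 2) be pairwise disjoint bases of M, and let A₁ ⊆ B₁. Define C₁ = B_k ∪ (B₁ \ A₁), C₂ = A₁ ∪ B₂, and C_i = B_{i−1} ∪ B_i for i = 3, …, k. Then there exist sets D₁, …, D_k such that each D_i is an independent set of M contained in C_i, and D₁ ∪ ⋯ ∪ D_k = B₁ ∪ ⋯ ∪ B_k. -/
open Set Matroid

namespace MyExch

variable {α : Type*} {M : Matroid α} {I A P Q X Y : Set α} {e : α}

/-- rank of a set: cardinality of a `Basis'` of it. -/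
noncomputable def mrk (M : Matroid α) (A : Set α) : ℕ :=
  (M.exists_isBasis' A).choose.ncard

lemma basis'_ncard (hI : M.IsBasis' I A) : I.ncard = mrk M A := by
  have h2 := (M.exists_isBasis' A).choose_spec
  have b1 : (M ↾ A).IsBase I := (Matroid.isBase_restrict_iff' (M := M)).mpr hI
  have b2 : (M ↾ A).IsBase (M.exists_isBasis' A).choose := (Matroid.isBase_restrict_iff' (M := M)).mpr h2
  exact b1.ncard_eq_ncard_of_isBase b2

lemma basis_ncard (hI : M.IsBasis I A) : I.ncard = mrk M A :=
  basis'_ncard hI.isBasis'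

lemma indep_ncard_le_mrk [M.Finite] (hI : M.Indep I) (hIA : I ⊆ A) :
    I.ncard ≤ mrk M A := by
  obtain ⟨J, hJ, hIJ⟩ := hI.subset_isBasis'_of_subset hIA
  rw [← basis'_ncard hJ]
  exact ncard_le_ncard hIJ (M.set_finite J hJ.indep.subset_ground)

lemma mrk_mono [M.Finite] (h : A ⊆ P) : mrk M A ≤ mrk M P := by
  obtain ⟨I, hI⟩ := M.exists_isBasis' A
  rw [← basis'_ncard hI]
  exact indep_ncard_le_mrk hI.indep (hI.subset.trans h)

lemma indep_mrk_eq (hI : M.Indep I) : mrk M I = I.ncard :=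
  (basis_ncard hI.isBasis_self).symm

lemma mrk_le_ncard [M.Finite] (hA : A.Finite) : mrk M A ≤ A.ncard := by
  obtain ⟨I, hI⟩ := M.exists_isBasis' A
  rw [← basis'_ncard hI]
  exact ncard_le_ncard hI.subset hA

lemma indep_of_ncard_le_mrk [M.Finite] (hA : A ⊆ M.E) (h : A.ncard ≤ mrk M A) :
    M.Indep A := by
  obtain ⟨I, hI⟩ := M.exists_isBasis (X := A) hA
  have : A = I := by
    refine (eq_of_subset_of_ncard_le hI.subset ?_ (M.set_finite A hA)).symm
    rw [basis_ncard hI]; exact h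
  rw [this]; exact hI.indep

/-- a large enough independent subset is a basis -/
lemma basis_of_indep_of_mrk_le [M.Finite] (hI : M.Indep I) (hIP : I ⊆ P) (hP : P ⊆ M.E)
    (h : mrk M P ≤ I.ncard) : M.IsBasis I P := by
  obtain ⟨J, hJ, hIJ⟩ := hI.subset_isBasis_of_subset hIP hP
  have : I = J := eq_of_subset_of_ncard_le hIJ (by rw [basis_ncard hJ]; exact h)
    (M.set_finite J hJ.indep.subset_ground)
  rwa [this]

lemma mrk_insert_le [M.Finite] (hA : A ⊆ M.E) (he : e ∈ M.E) :
    mrk M (insert e A) ≤ mrk M A + 1 := by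
  obtain ⟨I, hI⟩ := M.exists_isBasis (X := A) hA
  obtain ⟨J, hJ, hIJ⟩ := hI.exists_isBasis_inter_eq_of_superset (subset_insert e A)
    (insert_subset he hA)
  rw [← basis_ncard hI, ← basis_ncard hJ]
  have hJsub : J ⊆ insert e I := by
    intro x hx
    rcases hJ.subset hx with rfl | hxA
    · exact mem_insert _ _
    · exact Set.mem_insert_of_mem _ (by rw [← hIJ]; exact ⟨hx, hxA⟩)
  calc J.ncard ≤ (insert e I).ncard :=
        ncard_le_ncard hJsub ((M.set_finite I hI.indep.subset_ground).insert e)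
    _ ≤ I.ncard + 1 := ncard_insert_le e I

/-- if `X` is inside the closure of `A`, adding it does not change the rank. -/
lemma mrk_union_eq_of_subset_closure [M.Finite] (hA : A ⊆ M.E) (hX : X ⊆ M.closure A) :
    mrk M (A ∪ X) = mrk M A := by
  obtain ⟨I, hI⟩ := M.exists_isBasis (X := A) hA
  have hI2 : M.IsBasis I (A ∪ X) := by
    refine hI.indep.isBasis_of_subset_of_subset_closure (hI.subset.trans subset_union_left) ?_
    rw [hI.closure_eq_closure]
    exact union_subset (M.subset_closure A hA) hX
  rw [← basis_ncard hI, ← basis_ncard hI2]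

/-- submodularity -/
lemma mrk_submod [M.Finite] (hA : A ⊆ M.E) (hP : P ⊆ M.E) :
    mrk M (A ∪ P) + mrk M (A ∩ P) ≤ mrk M A + mrk M P := by
  obtain ⟨I, hI⟩ := M.exists_isBasis (X := A ∩ P) ((inter_subset_left).trans hA)
  obtain ⟨J, hJ, hIJ⟩ := hI.exists_isBasis_inter_eq_of_superset
    (Y := A ∪ P) (inter_subset_left.trans subset_union_left) (union_subset hA hP)
  have hJfin : J.Finite := M.set_finite J hJ.indep.subset_ground
  have h1 : (J ∩ A).ncard ≤ mrk M A :=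
    indep_ncard_le_mrk (hJ.indep.inter_right A) inter_subset_right
  have h2 : (J ∩ P).ncard ≤ mrk M P :=
    indep_ncard_le_mrk (hJ.indep.inter_right P) inter_subset_right
  have hu : (J ∩ A) ∪ (J ∩ P) = J := by
    rw [← inter_union_distrib_left]; exact inter_eq_left.2 hJ.subset
  have hi : (J ∩ A) ∩ (J ∩ P) = I := by
    rw [← hIJ]; ext x; simp [mem_inter_iff]; tauto
  have key := ncard_union_add_ncard_inter (J ∩ A) (J ∩ P)
    (hJfin.inter_of_left A) (hJfin.inter_of_left P)
  rw [hu, hi] at key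
  rw [← basis_ncard hJ, ← basis_ncard hI]
  omega

end MyExch

namespace MyExch

open Set Matroid

variable {α : Type*} {M : Matroid α}

/-- The two-matroid partition theorem, in the special form needed:
if `W, X` are independent and the rank condition holds, `S` splits into a part
independent over `W` and a part independent over `X`. -/
theorem partitionQ [M.Finite] (n : ℕ) :
    ∀ (S W X : Set α), S.ncard ≤ n → S ⊆ M.E → M.Indep W → M.Indep X →
    Disjoint S W → Disjoint S X →
    (∀ A, A ⊆ S → A.ncard + W.ncard + X.ncard ≤ mrk M (A ∪ W) + mrk M (A ∪ X)) →
    ∃ Y Z, Y ∪ Z = S ∧ Disjoint Y Z ∧ M.Indep (W ∪ Y) ∧ M.Indep (X ∪ Z) := by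
  induction n with
  | zero =>
    intro S W X hn hS hW hX _ _ _
    have : S = ∅ := by
      have := M.set_finite S hS
      rwa [Nat.le_zero, Set.ncard_eq_zero this] at hn
    subst this
    exact ⟨∅, ∅, by simp, disjoint_empty _, by simpa using hW, by simpa using hX⟩
  | succ n IH =>
    intro S W X hn hS hW hX hSW hSX hcond
    have hSfin : S.Finite := M.set_finite S hS
    have hWfin : W.Finite := M.set_finite W hW.subset_ground
    have hXfin : X.Finite := M.set_finite X hX.subset_ground
    rcases eq_empty_or_nonempty S with rfl | hSne
    · exact ⟨∅, ∅, by simp, disjoint_empty _, by simpa using hW, by simpa using hX⟩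
    by_cases htight : ∃ A, A ⊆ S ∧ A.Nonempty ∧ A ≠ S ∧
        mrk M (A ∪ W) + mrk M (A ∪ X) ≤ A.ncard + W.ncard + X.ncard
    · -- Case 1 : a proper nonempty tight set exists
      obtain ⟨A, hAS, hAne, hAneS, hAt⟩ := htight
      have hAfin : A.Finite := hSfin.subset hAS
      have hAE : A ⊆ M.E := hAS.trans hS
      -- partition A by induction
      have hAcard : A.ncard ≤ n := by
        have h1 : A.ncard < S.ncard := Set.ncard_lt_ncard (hAS.ssubset_of_ne hAneS) hSfin
        omega
      obtain ⟨Y0, Z0, hYZ0, hdYZ0, hWY0, hXZ0⟩ :=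
        IH A W X hAcard hAE hW hX (hSW.mono_left hAS) (hSX.mono_left hAS)
          (fun A' hA' => hcond A' (hA'.trans hAS))
      have hY0A : Y0 ⊆ A := hYZ0 ▸ subset_union_left
      have hZ0A : Z0 ⊆ A := hYZ0 ▸ subset_union_right
      have hY0fin : Y0.Finite := hAfin.subset hY0A
      have hZ0fin : Z0.Finite := hAfin.subset hZ0A
      have hWY0card : (W ∪ Y0).ncard = W.ncard + Y0.ncard := by
        rw [Set.ncard_union_eq (hSW.mono_left (hY0A.trans hAS)).symm hWfin hY0fin]
      have hXZ0card : (X ∪ Z0).ncard = X.ncard + Z0.ncard := by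
        rw [Set.ncard_union_eq (hSX.mono_left (hZ0A.trans hAS)).symm hXfin hZ0fin]
      have hAcard' : A.ncard = Y0.ncard + Z0.ncard := by
        rw [← hYZ0, Set.ncard_union_eq hdYZ0 hY0fin hZ0fin]
      have e1 : W.ncard + Y0.ncard ≤ mrk M (A ∪ W) := by
        rw [← hWY0card]
        exact indep_ncard_le_mrk hWY0 (union_subset subset_union_right (hY0A.trans subset_union_left))
      have e2 : X.ncard + Z0.ncard ≤ mrk M (A ∪ X) := by
        rw [← hXZ0card]
        exact indep_ncard_le_mrk hXZ0 (union_subset subset_union_right (hZ0A.trans subset_union_left))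
      have hcondA := hcond A hAS
      have eq1 : mrk M (A ∪ W) = W.ncard + Y0.ncard := by omega
      have eq2 : mrk M (A ∪ X) = X.ncard + Z0.ncard := by omega
      -- W ∪ Y0 is a basis of A ∪ W, X ∪ Z0 a basis of A ∪ X
      have hbW : M.IsBasis (W ∪ Y0) (A ∪ W) :=
        basis_of_indep_of_mrk_le hWY0
          (union_subset subset_union_right (hY0A.trans subset_union_left))
          (union_subset hAE hW.subset_ground) (by omega)
      have hbX : M.IsBasis (X ∪ Z0) (A ∪ X) :=
        basis_of_indep_of_mrk_le hXZ0
          (union_subset subset_union_right (hZ0A.trans subset_union_left))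
          (union_subset hAE hX.subset_ground) (by omega)
      -- induction on S \ A with W' = W ∪ Y0, X' = X ∪ Z0
      have hSDcard : (S \ A).ncard ≤ n := by
        have h1 : (S \ A).ncard = S.ncard - A.ncard := Set.ncard_diff hAS hAfin
        have h2 : 1 ≤ A.ncard := Set.ncard_pos hAfin |>.mpr hAne
        omega
      have hcond' : ∀ A', A' ⊆ S \ A →
          A'.ncard + (W ∪ Y0).ncard + (X ∪ Z0).ncard ≤
            mrk M (A' ∪ (W ∪ Y0)) + mrk M (A' ∪ (X ∪ Z0)) := by
        intro A' hA'
        have hA'S : A' ⊆ S := hA'.trans diff_subset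
        have hA'E : A' ⊆ M.E := hA'S.trans hS
        have hA'fin : A'.Finite := hSfin.subset hA'S
        have hrw1 : mrk M (A' ∪ (W ∪ Y0)) = mrk M ((A' ∪ A) ∪ W) := by
          have hcl : (A ∪ W) ⊆ M.closure (A' ∪ (W ∪ Y0)) := by
            refine hbW.subset_closure.trans (M.closure_subset_closure subset_union_right)
          have := mrk_union_eq_of_subset_closure
            (union_subset hA'E (union_subset hW.subset_ground (hY0A.trans hAE))) hcl
          have hsub : W ∪ Y0 ⊆ A ∪ W :=
            union_subset subset_union_right (hY0A.trans subset_union_left)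
          rw [← this, union_assoc, union_eq_self_of_subset_left hsub, ← union_assoc]
        have hrw2 : mrk M (A' ∪ (X ∪ Z0)) = mrk M ((A' ∪ A) ∪ X) := by
          have hcl : (A ∪ X) ⊆ M.closure (A' ∪ (X ∪ Z0)) := by
            refine hbX.subset_closure.trans (M.closure_subset_closure subset_union_right)
          have := mrk_union_eq_of_subset_closure
            (union_subset hA'E (union_subset hX.subset_ground (hZ0A.trans hAE))) hcl
          have hsub : X ∪ Z0 ⊆ A ∪ X :=
            union_subset subset_union_right (hZ0A.trans subset_union_left)
          rw [← this, union_assoc, union_eq_self_of_subset_left hsub, ← union_assoc]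
        have hAA' : (A' ∪ A).ncard = A'.ncard + A.ncard :=
          Set.ncard_union_eq (disjoint_sdiff_left.mono_left hA') hA'fin hAfin
        have := hcond (A' ∪ A) (union_subset hA'S hAS)
        rw [hrw1, hrw2, hWY0card, hXZ0card]
        omega
      obtain ⟨Y1, Z1, hYZ1, hdYZ1, hWY1, hXZ1⟩ :=
        IH (S \ A) (W ∪ Y0) (X ∪ Z0) hSDcard (diff_subset.trans hS) hWY0 hXZ0
          (Disjoint.union_right (hSW.mono_left diff_subset) (disjoint_sdiff_left.mono_right hY0A))
          (Disjoint.union_right (hSX.mono_left diff_subset) (disjoint_sdiff_left.mono_right hZ0A))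
          hcond'
      have hY1 : Y1 ⊆ S \ A := hYZ1 ▸ subset_union_left
      have hZ1 : Z1 ⊆ S \ A := hYZ1 ▸ subset_union_right
      refine ⟨Y0 ∪ Y1, Z0 ∪ Z1, ?_, ?_, ?_, ?_⟩
      · rw [Set.union_union_union_comm, hYZ0, hYZ1, union_diff_cancel hAS]
      · refine Disjoint.union_left ?_ ?_
        · exact Disjoint.union_right hdYZ0 ((disjoint_sdiff_left.mono_right hY0A).symm.mono_right hZ1)
        · exact Disjoint.union_right ((disjoint_sdiff_left.mono_right hZ0A).mono_left hY1) hdYZ1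
      · rwa [← union_assoc]
      · rwa [← union_assoc]
    · -- Case 2 : no proper nonempty tight subset
      push_neg at htight
      have hstrict : ∀ A, A ⊆ S → A.Nonempty → A ≠ S →
          A.ncard + W.ncard + X.ncard + 1 ≤ mrk M (A ∪ W) + mrk M (A ∪ X) := by
        intro A h1 h2 h3
        have := htight A h1 h2 h3
        omega
      by_cases hXS : M.Indep (X ∪ S)
      · exact ⟨∅, S, by simp, disjoint_empty _ |>.symm, by simpa using hW, hXS⟩
      -- find e ∈ S in the closure of (S \ {e}) ∪ X
      obtain ⟨J, hJ, hXJ⟩ := hX.subset_isBasis_of_subset (subset_union_left (t := S))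
        (union_subset hX.subset_ground hS)
      have hJne : J ≠ X ∪ S := fun h => hXS (h ▸ hJ.indep)
      obtain ⟨e, heXS, heJ⟩ : ∃ e, e ∈ X ∪ S ∧ e ∉ J := by
        by_contra h
        push_neg at h
        exact hJne (hJ.subset.antisymm h)
      have heS : e ∈ S := heXS.resolve_left (fun h => heJ (hXJ h))
      have heE : e ∈ M.E := hS heS
      have heW : e ∉ W := disjoint_left.mp hSW heS
      have hecl : e ∈ M.closure ((S \ {e}) ∪ X) := by
        have h1 : e ∈ M.closure J := hJ.subset_closure heXS
        refine M.closure_subset_closure ?_ h1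
        intro x hx
        rcases hJ.subset hx with hxX | hxS
        · exact Or.inr hxX
        · exact Or.inl ⟨hxS, fun h => heJ (h ▸ hx)⟩
      have hSeE : (S \ {e}) ∪ X ⊆ M.E := union_subset (diff_subset.trans hS) hX.subset_ground
      have hrkSX : mrk M (S ∪ X) = mrk M ((S \ {e}) ∪ X) := by
        have h1 := mrk_union_eq_of_subset_closure hSeE (singleton_subset_iff.mpr hecl)
        have hseteq : ((S \ {e}) ∪ X) ∪ {e} = S ∪ X := by
          rw [union_right_comm, Set.diff_union_self,
            union_eq_self_of_subset_right (singleton_subset_iff.mpr heS)]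
        rw [← hseteq, h1]
      -- W ∪ {e} is independent
      have hWe : M.Indep (insert e W) := by
        have hmrk : W.ncard + 1 ≤ mrk M (insert e W) := by
          rcases eq_or_ne S {e} with hSe | hSne'
          · have hc := hcond S (le_refl _)
            have h0 : S \ {e} = ∅ := by rw [hSe]; simp
            have h1 : mrk M (S ∪ X) = X.ncard := by
              rw [hrkSX, h0, empty_union, indep_mrk_eq hX]
            have h2 : S ∪ W = insert e W := by rw [hSe, singleton_union]
            have h3 : S.ncard = 1 := by rw [hSe, Set.ncard_singleton]
            rw [h2, h1, h3] at hc
            omega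
          · have hne : ({e} : Set α) ≠ S := fun h => hSne' h.symm
            have h1 := hstrict {e} (singleton_subset_iff.mpr heS) (singleton_nonempty e) hne
            have h2 : mrk M (insert e X) ≤ X.ncard + 1 := by
              rw [← indep_mrk_eq hX]
              exact mrk_insert_le hX.subset_ground heE
            rw [Set.ncard_singleton, singleton_union, singleton_union] at h1
            omega
        refine indep_of_ncard_le_mrk (insert_subset heE hW.subset_ground) ?_
        rw [Set.ncard_insert_of_notMem heW hWfin]
        exact hmrk
      -- apply induction to S \ {e}, insert e W, X
      have hcount : (S \ {e}).ncard ≤ n := by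
        have h1 : (S \ {e}).ncard = S.ncard - 1 := by
          rw [Set.ncard_diff (singleton_subset_iff.mpr heS) (finite_singleton e),
            Set.ncard_singleton]
        have h2 : 1 ≤ S.ncard := Set.ncard_pos hSfin |>.mpr hSne
        omega
      have hWecard : (insert e W).ncard = W.ncard + 1 := Set.ncard_insert_of_notMem heW hWfin
      have hcond2 : ∀ A, A ⊆ S \ {e} →
          A.ncard + (insert e W).ncard + X.ncard ≤
            mrk M (A ∪ insert e W) + mrk M (A ∪ X) := by
        intro A hA
        have hAS : A ⊆ S := hA.trans diff_subset
        have hAfin : A.Finite := hSfin.subset hAS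
        have heA : e ∉ A := fun h => (hA h).2 rfl
        have hrw : A ∪ insert e W = insert e A ∪ W := by
          rw [Set.union_insert, Set.insert_union]
        have hiAcard : (insert e A).ncard = A.ncard + 1 := Set.ncard_insert_of_notMem heA hAfin
        rcases eq_or_ne A (S \ {e}) with hAeq | hAne
        · -- boundary case A = S \ {e}
          have h1 : insert e A ∪ W = S ∪ W := by
            rw [hAeq, Set.insert_diff_singleton, Set.insert_eq_of_mem heS]
          have h2 : mrk M (A ∪ X) = mrk M (S ∪ X) := by rw [hAeq]; exact hrkSX.symm
          have hc := hcond S (le_refl _)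
          have h3 : A.ncard = S.ncard - 1 := by
            rw [hAeq, Set.ncard_diff (singleton_subset_iff.mpr heS) (finite_singleton e),
              Set.ncard_singleton]
          have h4 : 1 ≤ S.ncard := Set.ncard_pos hSfin |>.mpr hSne
          rw [hrw, h1, h2, hWecard]
          omega
        · -- strict case
          have hiA : insert e A ⊆ S := insert_subset heS hAS
          have hiAneS : insert e A ≠ S := by
            intro h
            obtain ⟨f, hf1, hf2⟩ := Set.exists_of_ssubset (hA.ssubset_of_ne hAne)
            have hfS : f ∈ S := hf1.1
            have : f ∈ insert e A := h.symm ▸ hfS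
            rcases this with rfl | hfA
            · exact hf1.2 rfl
            · exact hf2 hfA
          have h1 := hstrict (insert e A) hiA (insert_nonempty e A) hiAneS
          have h2 : mrk M (insert e A ∪ X) ≤ mrk M (A ∪ X) + 1 := by
            rw [Set.insert_union]
            exact mrk_insert_le (union_subset (hAS.trans hS) hX.subset_ground) heE
          rw [hiAcard] at h1
          rw [hrw, hWecard]
          omega
      obtain ⟨Y1, Z1, hYZ1, hdYZ1, hWY1, hXZ1⟩ :=
        IH (S \ {e}) (insert e W) X hcount (diff_subset.trans hS) hWe hX
          (by rw [Set.insert_eq]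
              exact Disjoint.union_right (by simp) (hSW.mono_left diff_subset))
          (hSX.mono_left diff_subset) hcond2
      have hZ1sub : Z1 ⊆ S \ {e} := hYZ1 ▸ subset_union_right
      refine ⟨insert e Y1, Z1, ?_, ?_, ?_, hXZ1⟩
      · rw [Set.insert_union, hYZ1, Set.insert_diff_singleton, Set.insert_eq_of_mem heS]
      · rw [Set.insert_eq]
        exact Disjoint.union_left (disjoint_singleton_left.mpr fun h => (hZ1sub h).2 rfl) hdYZ1
      · rwa [Set.union_insert, ← Set.insert_union]

end MyExch

namespace MyExch

open Set Matroid

variable {α : Type*} {M : Matroid α}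

/-- Symmetric basis exchange for subsets: for disjoint bases `B1, B2` and `X ⊆ B1`,
there is `Y ⊆ B2` with `(B1 \ X) ∪ Y` and `X ∪ (B2 \ Y)` both bases. -/
theorem symExch [M.Finite] {B1 B2 X : Set α} (hB1 : M.IsBase B1) (hB2 : M.IsBase B2)
    (hd : Disjoint B1 B2) (hX : X ⊆ B1) :
    ∃ Y, Y ⊆ B2 ∧ M.IsBase ((B1 \ X) ∪ Y) ∧ M.IsBase (X ∪ (B2 \ Y)) := by
  have hB1fin : B1.Finite := M.set_finite B1 hB1.subset_ground
  have hB2fin : B2.Finite := M.set_finite B2 hB2.subset_ground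
  have hXfin : X.Finite := hB1fin.subset hX
  have hXi : M.Indep X := hB1.indep.subset hX
  have hWi : M.Indep (B1 \ X) := hB1.indep.subset diff_subset
  have hWfin : (B1 \ X).Finite := hB1fin.subset diff_subset
  have hWX : (B1 \ X).ncard + X.ncard = B1.ncard := by
    have := Set.ncard_diff hX hXfin
    have := Set.ncard_le_ncard hX hB1fin
    omega
  have hbound : ∀ I, M.Indep I → I.ncard ≤ B1.ncard := by
    intro I hI
    obtain ⟨B', hB', hIB⟩ := hI.exists_isBase_superset
    calc I.ncard ≤ B'.ncard := ncard_le_ncard hIB (M.set_finite B' hB'.subset_ground)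
      _ = B1.ncard := hB'.ncard_eq_ncard_of_isBase hB1
  have hbase : ∀ I, M.Indep I → B1.ncard ≤ I.ncard → M.IsBase I := by
    intro I hI h
    obtain ⟨B', hB', hIB⟩ := hI.exists_isBase_superset
    have : I = B' := eq_of_subset_of_ncard_le hIB
      (by rw [hB'.ncard_eq_ncard_of_isBase hB1]; exact h)
      (M.set_finite B' hB'.subset_ground)
    rwa [this]
  have hcond : ∀ A, A ⊆ B2 →
      A.ncard + (B1 \ X).ncard + X.ncard ≤ mrk M (A ∪ (B1 \ X)) + mrk M (A ∪ X) := by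
    intro A hA
    have hAE : A ⊆ M.E := hA.trans hB2.subset_ground
    have hAi : M.Indep A := hB2.indep.subset hA
    have hsub := mrk_submod (M := M) (A := A ∪ (B1 \ X)) (P := A ∪ X)
      (union_subset hAE (diff_subset.trans hB1.subset_ground))
      (union_subset hAE (hX.trans hB1.subset_ground))
    have hu : (A ∪ (B1 \ X)) ∪ (A ∪ X) = A ∪ B1 := by
      rw [Set.union_union_union_comm, Set.union_self, Set.diff_union_of_subset hX]
    have hi : (A ∪ (B1 \ X)) ∩ (A ∪ X) = A := by
      rw [← Set.union_inter_distrib_left, (disjoint_sdiff_left (s := X) (t := B1)).inter_eq,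
        union_empty]
    rw [hu, hi] at hsub
    have h1 : B1.ncard ≤ mrk M (A ∪ B1) := by
      rw [← indep_mrk_eq hB1.indep]
      exact mrk_mono subset_union_right
    have h2 : mrk M A = A.ncard := indep_mrk_eq hAi
    omega
  obtain ⟨Y, Z, hYZ, hdYZ, hIY, hIZ⟩ :=
    partitionQ (M := M) B2.ncard B2 (B1 \ X) X (le_refl _) hB2.subset_ground hWi hXi
      (hd.symm.mono_right diff_subset) (hd.symm.mono_right hX) hcond
  have hYB2 : Y ⊆ B2 := hYZ ▸ subset_union_left
  have hZB2 : Z ⊆ B2 := hYZ ▸ subset_union_right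
  have hYfin : Y.Finite := hB2fin.subset hYB2
  have hZfin : Z.Finite := hB2fin.subset hZB2
  have hYZcard : Y.ncard + Z.ncard = B2.ncard := by
    rw [← Set.ncard_union_eq hdYZ hYfin hZfin, hYZ]
  have hB12 : B2.ncard = B1.ncard := hB2.ncard_eq_ncard_of_isBase hB1
  have hc1 : ((B1 \ X) ∪ Y).ncard = (B1 \ X).ncard + Y.ncard :=
    Set.ncard_union_eq (hd.mono_right hYB2 |>.mono_left diff_subset) hWfin hYfin
  have hc2 : (X ∪ Z).ncard = X.ncard + Z.ncard :=
    Set.ncard_union_eq (hd.mono_right hZB2 |>.mono_left hX) hXfin hZfin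
  have hb1 : ((B1 \ X) ∪ Y).ncard ≤ B1.ncard := hbound _ (hIY.subset (by rw [union_comm]))
  have hb2 : (X ∪ Z).ncard ≤ B1.ncard := hbound _ (hIZ.subset (by rw [union_comm]))
  have hZeq : B2 \ Y = Z := by
    rw [← hYZ, Set.union_diff_cancel_left hdYZ.inter_eq.subset]
  refine ⟨Y, hYB2, ?_, ?_⟩
  · refine hbase _ (hIY.subset (by rw [union_comm])) ?_
    omega
  · rw [hZeq]
    refine hbase _ (hIZ.subset (by rw [union_comm])) ?_
    omega

end MyExch

namespace MyExch

open Set Matroid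

lemma fin_sub_one_val {m : ℕ} (i : Fin (m+2)) (h : 1 ≤ (i:ℕ)) :
    ((i - 1 : Fin (m+2)) : ℕ) = (i:ℕ) - 1 := by
  have hlt := i.isLt
  simp only [Fin.sub_def, Fin.val_one]
  have h4 : m + 2 - 1 + (i:ℕ) = ((i:ℕ) - 1) + (m+2) := by omega
  rw [h4, Nat.add_mod_right, Nat.mod_eq_of_lt (by omega)]

lemma fin_zero_sub_one_val {m : ℕ} : (((0:Fin (m+2)) - 1 : Fin (m+2)) : ℕ) = m + 1 := by
  simp [Fin.sub_def]

end MyExch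

/-- Let `B 0, …, B (k-1)` (`k ≥ 2`) be pairwise disjoint bases of a finite matroid `M`,
and `A₁ ⊆ B 0`.  With `C 0 = B (k-1) ∪ (B 0 \ A₁)`, `C 1 = A₁ ∪ B 1`, and
`C i = B (i-1) ∪ B i` for `i ≥ 2`, there exist sets `D 0, …, D (k-1)`, each `D i`
independent in `M` and contained in `C i`, with `D 0 ∪ ⋯ ∪ D (k-1) = B 0 ∪ ⋯ ∪ B (k-1)`. -/
theorem exists_independent_partition {α : Type*} {k : ℕ} [NeZero k] (hk : 2 ≤ k)
    (M : Matroid α) (hM : M.Finite)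
    (B : Fin k → Set α) (hB : ∀ i, M.IsBase (B i))
    (hdisj : ∀ i j : Fin k, i ≠ j → Disjoint (B i) (B j))
    (A₁ : Set α) (hA₁ : A₁ ⊆ B 0)
    (C : Fin k → Set α)
    (hC0 : C 0 = B (0 - 1) ∪ (B 0 \ A₁))
    (hC1 : C 1 = A₁ ∪ B 1)
    (hCi : ∀ i : Fin k, 2 ≤ (i : ℕ) → C i = B (i - 1) ∪ B i) :
    ∃ D : Fin k → Set α, (∀ i, M.Indep (D i) ∧ D i ⊆ C i) ∧
      (⋃ i, D i) = ⋃ i, B i := by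
  classical
  haveI := hM
  obtain ⟨m, rfl⟩ : ∃ m, k = m + 2 := ⟨k - 2, by omega⟩
  open Set MyExch in
  set nB : ℕ → Set α := fun n => B ⟨n % (m+2), Nat.mod_lt _ (by omega)⟩ with hnB
  have hnBeq : ∀ (n : ℕ) (h : n < m+2), nB n = B ⟨n, h⟩ := by
    intro n h
    simp only [hnB]
    apply congrArg B
    apply Fin.ext
    exact Nat.mod_eq_of_lt h
  have hnB_base : ∀ n, M.IsBase (nB n) := fun n => hB _
  have hdisj' : ∀ a b : ℕ, a < m+2 → b < m+2 → a ≠ b → Disjoint (nB a) (nB b) := by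
    intro a b ha hb hne
    rw [hnBeq a ha, hnBeq b hb]
    exact hdisj _ _ (fun h => hne (congrArg Fin.val h))
  have hB0 : B 0 = nB 0 := (hnBeq 0 (by omega)).symm
  have hB1 : B 1 = nB 1 := (hnBeq 1 (by omega)).symm
  -- the chain of exchanges
  have chain : ∀ n : ℕ, 1 ≤ n → n ≤ m + 1 → ∃ T : ℕ → Set α,
      (∀ i, 1 ≤ i → i ≤ n → T i ⊆ nB i) ∧
      M.IsBase (A₁ ∪ (nB 1 \ T 1)) ∧
      (∀ i, 2 ≤ i → i ≤ n → M.IsBase (T (i-1) ∪ (nB i \ T i))) ∧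
      M.IsBase ((B 0 \ A₁) ∪ T n) := by
    intro n
    induction n with
    | zero => intro h; omega
    | succ n IH =>
      intro _ hle
      rcases Nat.eq_zero_or_pos n with rfl | hn
      · -- base case : n + 1 = 1
        obtain ⟨Y, hY, hbase1, hbase2⟩ := MyExch.symExch (hB 0) (hnB_base 1)
          (by rw [hB0]; exact hdisj' 0 1 (by omega) (by omega) (by omega)) hA₁
        refine ⟨fun _ => Y, ?_, ?_, ?_, ?_⟩
        · intro i h1 h2
          have : i = 1 := by omega
          subst this
          exact hY
        · exact hbase2
        · intro i h1 h2; omega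
        · exact hbase1
      · obtain ⟨T, hTsub, hT1, hTmid, hT0⟩ := IH (by omega) (by omega)
        have hTn : T n ⊆ nB n := hTsub n hn (le_refl n)
        have hdisj2 : Disjoint ((B 0 \ A₁) ∪ T n) (nB (n+1)) := by
          refine Disjoint.union_left ?_ ?_
          · refine (hdisj' 0 (n+1) (by omega) (by omega) (by omega)).mono_left ?_
            rw [← hB0]; exact diff_subset
          · exact (hdisj' n (n+1) (by omega) (by omega) (by omega)).mono_left hTn
        obtain ⟨Y, hY, hbase1, hbase2⟩ :=
          MyExch.symExch hT0 (hnB_base (n+1)) hdisj2 subset_union_right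
        have hTY : ((B 0 \ A₁) ∪ T n) \ T n = B 0 \ A₁ := by
          rw [Set.union_diff_right]
          refine Disjoint.sdiff_eq_left ?_
          refine (hdisj' 0 n (by omega) (by omega) (by omega)).mono_left ?_ |>.mono_right hTn
          rw [← hB0]; exact diff_subset
        rw [hTY] at hbase1
        refine ⟨fun i => if i = n+1 then Y else T i, ?_, ?_, ?_, ?_⟩
        · intro i h1 h2
          by_cases hi : i = n+1
          · subst hi
            show (if n+1 = n+1 then Y else T (n+1)) ⊆ nB (n+1)
            rw [if_pos rfl]; exact hY
          · show (if i = n+1 then Y else T i) ⊆ nB i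
            rw [if_neg hi]; exact hTsub i h1 (by omega)
        · show M.IsBase (A₁ ∪ (nB 1 \ (if 1 = n+1 then Y else T 1)))
          rw [if_neg (by omega)]; exact hT1
        · intro i h1 h2
          show M.IsBase ((if i-1 = n+1 then Y else T (i-1)) ∪
            (nB i \ (if i = n+1 then Y else T i)))
          by_cases hi : i = n+1
          · subst hi
            rw [show n+1-1 = n from rfl, if_neg (by omega), if_pos rfl]
            exact hbase2
          · rw [if_neg (by omega), if_neg hi]
            exact hTmid i h1 (by omega)
        · show M.IsBase ((B 0 \ A₁) ∪ (if n+1 = n+1 then Y else T (n+1)))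
          rw [if_pos rfl]; exact hbase1
  obtain ⟨T, hTsub, hT1, hTmid, hT0⟩ := chain (m+1) (by omega) (le_refl _)
  set D : Fin (m+2) → Set α := fun i =>
    if (i : ℕ) = 0 then (B 0 \ A₁) ∪ T (m+1)
    else if (i : ℕ) = 1 then A₁ ∪ (nB 1 \ T 1)
    else T ((i:ℕ)-1) ∪ (nB (i:ℕ) \ T (i:ℕ)) with hD
  have hsub01 : (0 - 1 : Fin (m+2)) = ⟨m+1, by omega⟩ :=
    Fin.ext MyExch.fin_zero_sub_one_val
  have hfin1 : ((1 : Fin (m+2)) : ℕ) = 1 := rfl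
  -- evaluations of D
  have hD0 : D 0 = (B 0 \ A₁) ∪ T (m+1) := by rw [hD]; simp
  have hD1 : D 1 = A₁ ∪ (nB 1 \ T 1) := by rw [hD]; norm_num
  have hDv : ∀ i : Fin (m+2), 2 ≤ (i:ℕ) →
      D i = T ((i:ℕ)-1) ∪ (nB (i:ℕ) \ T (i:ℕ)) := by
    intro i hi
    rw [hD]
    simp only []
    rw [if_neg (by omega), if_neg (by omega)]
  have hTend : T (m+1) ⊆ nB (m+1) := hTsub (m+1) (by omega) (le_refl _)
  refine ⟨D, ?_, ?_⟩
  · intro i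
    have hvlt := i.isLt
    by_cases h0 : (i:ℕ) = 0
    · have hieq : i = 0 := Fin.ext h0
      subst hieq
      rw [hD0, hC0, hsub01]
      refine ⟨hT0.indep, union_subset subset_union_right ?_⟩
      refine (hTend.trans ?_).trans subset_union_left
      rw [hnBeq (m+1) (by omega)]
    · by_cases h1 : (i:ℕ) = 1
      · have hieq : i = 1 := Fin.ext (by rw [h1, hfin1])
        subst hieq
        rw [hD1, hC1]
        refine ⟨hT1.indep, union_subset subset_union_left ?_⟩
        rw [hB1]
        exact (diff_subset).trans subset_union_right
      · have h2 : 2 ≤ (i:ℕ) := by omega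
        rw [hDv i h2, hCi i h2]
        have hm1 : ((i - 1 : Fin (m+2)) : ℕ) = (i:ℕ) - 1 :=
          MyExch.fin_sub_one_val i (by omega)
        have hBm1 : B (i - 1) = nB ((i:ℕ)-1) := by
          rw [hnBeq ((i:ℕ)-1) (by omega)]
          apply congrArg B
          apply Fin.ext
          exact hm1
        have hBi : B i = nB (i:ℕ) := by
          rw [hnBeq (i:ℕ) hvlt, Fin.eta]
        refine ⟨(hTmid (i:ℕ) h2 (by omega)).indep, ?_⟩
        rw [hBm1, hBi]
        exact union_subset
          ((hTsub ((i:ℕ)-1) (by omega) (by omega)).trans subset_union_left)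
          (diff_subset.trans subset_union_right)
  · apply subset_antisymm
    · refine iUnion_subset fun i => ?_
      have hvlt := i.isLt
      have hmem : ∀ (j : ℕ) (h : j < m+2), B ⟨j, h⟩ ⊆ ⋃ l, B l := fun j h => subset_iUnion B _
      by_cases h0 : (i:ℕ) = 0
      · have hieq : i = 0 := Fin.ext h0
        subst hieq
        rw [hD0]
        refine union_subset (diff_subset.trans (subset_iUnion B 0)) ?_
        refine hTend.trans ?_
        rw [hnBeq (m+1) (by omega)]
        exact hmem _ _
      · by_cases h1 : (i:ℕ) = 1
        · have hieq : i = 1 := Fin.ext (by rw [h1, hfin1])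
          subst hieq
          rw [hD1]
          refine union_subset (hA₁.trans (subset_iUnion B 0)) ?_
          refine diff_subset.trans ?_
          rw [hnBeq 1 (by omega)]
          exact hmem _ _
        · have h2 : 2 ≤ (i:ℕ) := by omega
          rw [hDv i h2]
          refine union_subset ?_ ?_
          · refine (hTsub ((i:ℕ)-1) (by omega) (by omega)).trans ?_
            rw [hnBeq ((i:ℕ)-1) (by omega)]
            exact hmem _ _
          · refine diff_subset.trans ?_
            rw [hnBeq (i:ℕ) hvlt]
            exact hmem _ _
    · refine iUnion_subset fun i => fun x hx => ?_
      have hvlt := i.isLt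
      rw [mem_iUnion]
      by_cases h0 : (i:ℕ) = 0
      · have hieq : i = 0 := Fin.ext h0
        subst hieq
        by_cases hxA : x ∈ A₁
        · exact ⟨1, by rw [hD1]; exact Or.inl hxA⟩
        · exact ⟨0, by rw [hD0]; exact Or.inl ⟨hx, hxA⟩⟩
      · have hv1 : 1 ≤ (i:ℕ) := by omega
        have hxnB : x ∈ nB (i:ℕ) := by
          rw [hnBeq (i:ℕ) hvlt, Fin.eta]; exact hx
        by_cases hxT : x ∈ T (i:ℕ)
        · by_cases hvm : (i:ℕ) = m+1
          · refine ⟨0, ?_⟩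
            rw [hD0]
            exact Or.inr (hvm ▸ hxT)
          · refine ⟨⟨(i:ℕ)+1, by omega⟩, ?_⟩
            rw [hDv ⟨(i:ℕ)+1, by omega⟩ (by simp; omega)]
            exact Or.inl (by simpa using hxT)
        · by_cases h1 : (i:ℕ) = 1
          · refine ⟨1, ?_⟩
            rw [hD1]
            refine Or.inr ⟨?_, ?_⟩
            · rw [← h1]; exact hxnB
            · rw [← h1]; exact hxT
          · refine ⟨i, ?_⟩
            rw [hDv i (by omega)]
            exact Or.inr ⟨hxnB, hxT⟩
end
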